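/- arXiv:0902.0709 — 5 statements merged into one kernel-verified Lean document; each statement's English description precedes it below -/
import Mathlib

section
/- Let t ≥ 1 and let x_1 > x_2 > ... > x_t be integers of the same parity (positions on a lattice line). Define H_t(x_1,...,x_t) as the sum over all families of integer configurations x^{(1)}, ..., x^{(t-1)} (with x^{(s)} having s+1 points including fixed virtual particles) of the product over s = 1,...,t-1 of det[φ(x^{(s)}_i, x^{(s+1)}_j)]_{i,j=1}^{s+1}, where φ(x,y) = χ(y > x) and consecutive configurations interlace. Then H_t(x_1,...,x_t) = c_t · Δ(x_1,...,x_t), where Δ is the Vandermonde determinant ∏_{i<j}(x_i − x_j) and c_t = 1/(2^{t(t-1)/2} ∏_{k=1}^{t-1} k!). -/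
open Finset in
/-- `Hchain t x` is the number of interlacing chains `x⁽¹⁾, …, x⁽ᵗ⁾ = x` of strictly
decreasing integer configurations on the lattice, where `x⁽ˢ⁾` has `s` particles,
consecutive configurations strictly interlace (`x⁽ˢ⁺¹⁾_{i+1} < x⁽ˢ⁾_i < x⁽ˢ⁺¹⁾_i`),
and particles on consecutive lines have opposite parity.  Equivalently, it is the sum
over `x⁽¹⁾, …, x⁽ᵗ⁻¹⁾` of `∏_s det[φ(x⁽ˢ⁾_i, x⁽ˢ⁺¹⁾_j)]` with `φ(x,y) = χ(y > x)`. -/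
noncomputable def Hchain : (t : ℕ) → (Fin t → ℤ) → ℤ
  | 0, _ => 1
  | t + 1, x =>
      ∑ y ∈ Fintype.piFinset (fun i : Fin t =>
        (Finset.Ioo (x i.succ) (x i.castSucc)).filter
          (fun z => ¬ (2 ∣ (z - x i.castSucc)))),
        Hchain t y

namespace StmtAux

open Finset Polynomial

/-- step-2 falling factorial polynomial -/
noncomputable def P (j : ℕ) : ℤ[X] := ∏ k ∈ Finset.range j, (X - C (2 * (k : ℤ)))

lemma P_monic (j : ℕ) : (P j).Monic :=
  monic_prod_of_monic _ _ fun k _ => monic_X_sub_C _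

lemma P_natDegree (j : ℕ) : (P j).natDegree = j := by
  rw [P, natDegree_prod_of_monic _ _ (fun k _ => monic_X_sub_C _)]
  simp only [natDegree_X_sub_C, Finset.sum_const, smul_eq_mul, mul_one, Finset.card_range]

lemma P_eval (j : ℕ) (z : ℤ) : (P j).eval z = ∏ k ∈ Finset.range j, (z - 2 * k) := by
  simp [P, eval_prod]

lemma P_zero_eval (z : ℤ) : (P 0).eval z = 1 := by simp [P_eval]

lemma P_diff (j : ℕ) (z : ℤ) :
    (P (j + 1)).eval (z + 2) - (P (j + 1)).eval z = (2 * ((j : ℤ) + 1)) * (P j).eval z := by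
  simp only [P_eval]
  rw [Finset.prod_range_succ', Finset.prod_range_succ]
  have h : ∀ k ∈ Finset.range j, (z + 2 - 2 * (((k + 1 : ℕ) : ℤ))) = z - 2 * k := by
    intro k _; push_cast; ring
  rw [Finset.prod_congr rfl h]
  ring

lemma sum_filter_parity (f : ℤ → ℤ) (a : ℤ) : ∀ (m : ℕ),
    ∑ z ∈ (Finset.Ioo a (a + 2 * (m : ℤ))).filter
        (fun z => ¬ (2 ∣ (z - (a + 2 * (m : ℤ))))), f z
      = ∑ k ∈ Finset.range m, f (a + 1 + 2 * k)
  | 0 => by simp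
  | m + 1 => by
      have hset : (Finset.Ioo a (a + 2 * ((m + 1 : ℕ) : ℤ))).filter
            (fun z => ¬ (2 ∣ (z - (a + 2 * ((m + 1 : ℕ) : ℤ)))))
          = insert (a + 1 + 2 * (m : ℤ))
            ((Finset.Ioo a (a + 2 * (m : ℤ))).filter
              (fun z => ¬ (2 ∣ (z - (a + 2 * (m : ℤ)))))) := by
        ext z
        simp only [Finset.mem_filter, Finset.mem_Ioo, Finset.mem_insert]
        push_cast
        omega
      have hnot : (a + 1 + 2 * (m : ℤ)) ∉
          (Finset.Ioo a (a + 2 * (m : ℤ))).filter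
            (fun z => ¬ (2 ∣ (z - (a + 2 * (m : ℤ))))) := by
        simp only [Finset.mem_filter, Finset.mem_Ioo]
        omega
      rw [hset, Finset.sum_insert hnot, sum_filter_parity f a m, Finset.sum_range_succ]
      ring

lemma sum_P_eval (j : ℕ) (a b : ℤ) (hab : a ≤ b) (hpar : (2:ℤ) ∣ b - a) :
    (2 * ((j : ℤ) + 1)) *
        ∑ z ∈ (Finset.Ioo a b).filter (fun z => ¬ (2 ∣ (z - b))), (P j).eval z
      = (P (j + 1)).eval (b + 1) - (P (j + 1)).eval (a + 1) := by
  obtain ⟨m, hm⟩ : ∃ m : ℕ, b = a + 2 * (m : ℤ) := by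
    obtain ⟨c, hc⟩ := hpar
    refine ⟨c.toNat, ?_⟩
    omega
  subst hm
  rw [sum_filter_parity, Finset.mul_sum]
  have h : ∀ k ∈ Finset.range m, 2 * ((j : ℤ) + 1) * (P j).eval (a + 1 + 2 * k)
      = (fun k : ℕ => (P (j + 1)).eval (a + 1 + 2 * (k : ℤ))) (k + 1)
        - (fun k : ℕ => (P (j + 1)).eval (a + 1 + 2 * (k : ℤ))) k := by
    intro k _
    simp only []
    rw [show (a + 1 + 2 * ((k + 1 : ℕ) : ℤ)) = (a + 1 + 2 * (k : ℤ)) + 2 by push_cast; ring]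
    rw [P_diff]
  rw [Finset.sum_congr rfl h,
    Finset.sum_range_sub (fun k : ℕ => (P (j + 1)).eval (a + 1 + 2 * (k : ℤ)))]
  simp only [Nat.cast_zero]
  ring_nf
lemma prod_eq_det_vandermonde_rev {n : ℕ} (x : Fin n → ℤ) :
    (∏ i : Fin n, ∏ j ∈ Finset.univ.filter (fun j => i < j), (x i - x j))
      = (Matrix.vandermonde (fun i => x i.rev)).det := by
  rw [Matrix.det_vandermonde]
  calc (∏ i : Fin n, ∏ j ∈ Finset.univ.filter (fun j => i < j), (x i - x j))
      = ∏ p ∈ Finset.univ.sigma (fun i : Fin n => Finset.univ.filter (fun j => i < j)),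
          (x p.1 - x p.2) :=
        (Finset.prod_sigma _ _ (fun p : Σ _ : Fin n, Fin n => x p.1 - x p.2)).symm
    _ = ∏ p ∈ Finset.univ.sigma (fun i : Fin n => Finset.Ioi i),
          (x p.2.rev - x p.1.rev) := ?_
    _ = ∏ i : Fin n, ∏ j ∈ Finset.Ioi i, (x j.rev - x i.rev) :=
        Finset.prod_sigma _ _ (fun p : Σ _ : Fin n, Fin n => x p.2.rev - x p.1.rev)
  refine Finset.prod_nbij' (fun p => ⟨p.2.rev, p.1.rev⟩) (fun p => ⟨p.2.rev, p.1.rev⟩)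
    ?_ ?_ ?_ ?_ ?_
  · intro p hp
    simp only [Finset.mem_sigma, Finset.mem_filter, Finset.mem_univ, true_and,
      Finset.mem_Ioi] at hp ⊢
    exact Fin.rev_lt_rev.mpr hp
  · intro p hp
    simp only [Finset.mem_sigma, Finset.mem_filter, Finset.mem_univ, true_and,
      Finset.mem_Ioi] at hp ⊢
    exact Fin.rev_lt_rev.mpr hp
  · intro p _; cases p; simp [Fin.rev_rev]
  · intro p _; cases p; simp [Fin.rev_rev]
  · intro p _; simp [Fin.rev_rev]

lemma key (t : ℕ) (v : Fin (t+1) → ℤ) (hv : StrictMono v)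
    (hpar : ∀ i j, (2:ℤ) ∣ v i - v j) :
    (2 ^ t * (Nat.factorial t : ℤ)) *
      ∑ y ∈ Fintype.piFinset (fun i : Fin t =>
          (Finset.Ioo (v i.castSucc) (v i.succ)).filter
            (fun z => ¬ (2 ∣ (z - v i.succ)))),
        (Matrix.vandermonde y).det
      = (Matrix.vandermonde v).det := by
  set S : Fin t → Finset ℤ := fun i =>
    (Finset.Ioo (v i.castSucc) (v i.succ)).filter
      (fun z => ¬ (2 ∣ (z - v i.succ))) with hS
  -- step 1: vandermonde determinant via monic polynomial basis
  have h1 : ∀ y : Fin t → ℤ, (Matrix.vandermonde y).det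
      = (Matrix.detRowAlternating (R := ℤ) (n := Fin t))
          (fun i => fun j : Fin t => (P (j : ℕ)).eval (y i)) := by
    intro y
    rw [Matrix.det_eval_matrixOfPolynomials_eq_det_vandermonde y (fun j : Fin t => P (j : ℕ))
      (fun j => P_natDegree _) (fun j => P_monic _)]
    rfl
  -- step 2: swap sum and determinant using multilinearity
  have h2 : ∑ y ∈ Fintype.piFinset S, (Matrix.vandermonde y).det
      = (Matrix.of (fun i j : Fin t => ∑ z ∈ S i, (P (j : ℕ)).eval z)).det := by
    have hms := (Matrix.detRowAlternating (R := ℤ) (n := Fin t)).toMultilinearMap.map_sum_finset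
      (g := fun (_ : Fin t) (z : ℤ) => fun j : Fin t => (P (j : ℕ)).eval z) (A := S)
    calc ∑ y ∈ Fintype.piFinset S, (Matrix.vandermonde y).det
        = ∑ y ∈ Fintype.piFinset S,
            (Matrix.detRowAlternating (R := ℤ) (n := Fin t)).toMultilinearMap
              (fun i => fun j : Fin t => (P (j : ℕ)).eval (y i)) := by
          refine Finset.sum_congr rfl fun y _ => ?_
          rw [h1 y]; rfl
      _ = (Matrix.detRowAlternating (R := ℤ) (n := Fin t)).toMultilinearMap
            (fun i => ∑ z ∈ S i, fun j : Fin t => (P (j : ℕ)).eval z) := hms.symm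
      _ = (Matrix.of (fun i j : Fin t => ∑ z ∈ S i, (P (j : ℕ)).eval z)).det := by
          have harg : (fun i => ∑ z ∈ S i, fun j : Fin t => (P (j : ℕ)).eval z)
              = (fun i => fun j : Fin t => ∑ z ∈ S i, (P (j : ℕ)).eval z) := by
            funext i
            exact funext fun j => by rw [Finset.sum_apply]
          rw [harg]
          rfl
  -- step 3: the constant as a product
  have h3 : (2 ^ t * (Nat.factorial t : ℤ)) = ∏ j : Fin t, (2 * ((j : ℤ) + 1)) := by
    rw [Finset.prod_mul_distrib, Finset.prod_const, Finset.card_univ, Fintype.card_fin]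
    congr 1
    rw [Fin.prod_univ_eq_prod_range (fun k => ((k : ℤ) + 1)) t,
      ← Finset.prod_range_add_one_eq_factorial t]
    push_cast
    rfl
  -- step 4: pull the constants into the columns and telescope
  have h4 : (∏ j : Fin t, (2 * ((j : ℤ) + 1))) *
        (Matrix.of (fun i j : Fin t => ∑ z ∈ S i, (P (j : ℕ)).eval z)).det
      = (Matrix.of (fun i j : Fin t =>
          (P ((j : ℕ) + 1)).eval (v i.succ + 1) - (P ((j : ℕ) + 1)).eval (v i.castSucc + 1))).det := by
    rw [← Matrix.det_mul_row]
    congr 1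
    ext i j
    simp only [Matrix.of_apply]
    exact sum_P_eval j (v i.castSucc) (v i.succ)
      (le_of_lt (hv (Fin.castSucc_lt_succ : i.castSucc < i.succ))) (hpar _ _)
  -- step 5: row differences of the big matrix
  have h5 : (Matrix.vandermonde (fun i : Fin (t+1) => v i + 1)).det
      = (Matrix.of (fun i j : Fin t =>
          (P ((j : ℕ) + 1)).eval (v i.succ + 1) - (P ((j : ℕ) + 1)).eval (v i.castSucc + 1))).det := by
    rw [Matrix.det_eval_matrixOfPolynomials_eq_det_vandermonde _ (fun j : Fin (t+1) => P (j : ℕ))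
      (fun j => P_natDegree _) (fun j => P_monic _)]
    set N : Matrix (Fin (t+1)) (Fin (t+1)) ℤ :=
      Matrix.of (fun i j => (P ((j : Fin (t+1)) : ℕ)).eval (v i + 1)) with hN
    set B' : Matrix (Fin (t+1)) (Fin (t+1)) ℤ := Matrix.of (fun i j =>
      Fin.cases (N 0 j) (fun i' => N i'.succ j - N i'.castSucc j) i) with hB'
    have hNB : N.det = B'.det := by
      apply Matrix.det_eq_of_forall_row_eq_smul_add_pred (fun _ => (1 : ℤ))
      · intro j; simp [hB']
      · intro i j
        simp only [hB', Matrix.of_apply, Fin.cases_succ]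
        ring
    rw [hNB, Matrix.det_succ_column_zero]
    rw [Finset.sum_eq_single 0]
    · simp only [Fin.val_zero, pow_zero, one_mul, hB', Matrix.of_apply, Fin.cases_zero]
      have hB00 : N 0 (0 : Fin (t+1)) = 1 := by
        simp [hN, P_zero_eval]
      rw [hB00, one_mul]
      refine congrArg Matrix.det ?_
      ext i j
      simp [hN, Matrix.submatrix_apply, Fin.succAbove_zero, Fin.cases_succ, Fin.val_succ]
    · intro i _ hi
      obtain ⟨i', rfl⟩ := Fin.exists_succ_eq.mpr hi
      have : B' i'.succ 0 = 0 := by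
        simp [hB', hN, P_zero_eval]
      rw [this]
      ring
    · intro h; exact absurd (Finset.mem_univ _) h
  have h6 : (Matrix.vandermonde (fun i : Fin (t+1) => v i + 1)).det
      = (Matrix.vandermonde v).det := by
    rw [Matrix.det_vandermonde, Matrix.det_vandermonde]
    refine Finset.prod_congr rfl fun i _ => Finset.prod_congr rfl fun j _ => by ring
  rw [h2, h3, h4, ← h5, h6]

lemma exp_succ (t : ℕ) : (t + 1) * ((t + 1) - 1) / 2 = t * (t - 1) / 2 + t := by
  cases t with
  | zero => rfl
  | succ n =>
    simp only [Nat.add_sub_cancel]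
    rw [show (n + 1 + 1) * (n + 1) = (n + 1) * n + (n + 1) * 2 by ring,
      Nat.add_mul_div_right _ _ (by norm_num : (0:ℕ) < 2)]

lemma main : ∀ (t : ℕ) (x : Fin t → ℤ), StrictAnti x → (∀ i j, (2 : ℤ) ∣ (x i - x j)) →
    (2 ^ (t * (t - 1) / 2) * ∏ k ∈ Finset.range t, (Nat.factorial k : ℤ)) * Hchain t x =
      ∏ i : Fin t, ∏ j ∈ Finset.univ.filter (fun j => i < j), (x i - x j) := by
  intro t
  induction t with
  | zero =>
    intro x _ _
    simp [Hchain]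
  | succ t ih =>
    intro x hx hpar
    set S : Fin t → Finset ℤ := fun i =>
      (Finset.Ioo (x i.succ) (x i.castSucc)).filter
        (fun z => ¬ (2 ∣ (z - x i.castSucc))) with hSdef
    have hHc : Hchain (t + 1) x = ∑ y ∈ Fintype.piFinset S, Hchain t y := by
      rw [Hchain]
    have hmem : ∀ y ∈ Fintype.piFinset S, ∀ i : Fin t,
        x i.succ < y i ∧ y i < x i.castSucc ∧ ¬ (2:ℤ) ∣ (y i - x i.castSucc) := by
      intro y hy i
      have h := (Fintype.mem_piFinset.mp hy) i
      simp only [hSdef, Finset.mem_filter, Finset.mem_Ioo] at h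
      exact ⟨h.1.1, h.1.2, h.2⟩
    have hanti : ∀ y ∈ Fintype.piFinset S, StrictAnti y := by
      intro y hy a b hab
      have hb := hmem y hy b
      have ha := hmem y hy a
      have hle : a.succ ≤ b.castSucc := by
        rw [Fin.le_def]
        simp only [Fin.lt_def] at hab
        simp only [Fin.val_succ, Fin.coe_castSucc]
        omega
      calc y b < x b.castSucc := hb.2.1
        _ ≤ x a.succ := hx.antitone hle
        _ < y a := ha.1
    have hpar' : ∀ y ∈ Fintype.piFinset S, ∀ i j, (2:ℤ) ∣ y i - y j := by
      intro y hy i j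
      have hi := (hmem y hy i).2.2
      have hj := (hmem y hy j).2.2
      have hij := hpar i.castSucc j.castSucc
      omega
    -- the reversed (increasing) configuration
    set v : Fin (t + 1) → ℤ := fun i => x i.rev with hvdef
    have hvmono : StrictMono v := by
      intro a b hab
      exact hx (Fin.rev_lt_rev.mpr hab)
    have hvpar : ∀ i j, (2:ℤ) ∣ v i - v j := fun i j => hpar _ _
    have hSrev : ∀ i : Fin t,
        (Finset.Ioo (v i.castSucc) (v i.succ)).filter
          (fun z => ¬ (2 ∣ (z - v i.succ))) = S i.rev := by
      intro i
      simp only [hvdef, hSdef, Fin.rev_castSucc, Fin.rev_succ]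
    -- reindex the sum
    have hreindex : ∑ y ∈ Fintype.piFinset S, (Matrix.vandermonde (fun i => y i.rev)).det
        = ∑ w ∈ Fintype.piFinset (fun i : Fin t =>
            (Finset.Ioo (v i.castSucc) (v i.succ)).filter
              (fun z => ¬ (2 ∣ (z - v i.succ)))),
          (Matrix.vandermonde w).det := by
      refine Finset.sum_nbij' (fun y => fun k : Fin t => y k.rev)
        (fun w => fun k : Fin t => w k.rev) ?_ ?_ ?_ ?_ ?_
      · intro y hy
        rw [Fintype.mem_piFinset]
        intro k
        rw [hSrev k]
        exact (Fintype.mem_piFinset.mp hy) k.rev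
      · intro w hw
        rw [Fintype.mem_piFinset]
        intro k
        have := (Fintype.mem_piFinset.mp hw) k.rev
        rw [hSrev k.rev, Fin.rev_rev] at this
        exact this
      · intro y _; funext k; simp [Fin.rev_rev]
      · intro w _; funext k; simp [Fin.rev_rev]
      · intro y _; rfl
    -- constants
    have hconst : (2:ℤ) ^ ((t + 1) * ((t + 1) - 1) / 2)
          * ∏ k ∈ Finset.range (t + 1), (Nat.factorial k : ℤ)
        = (2 ^ t * (Nat.factorial t : ℤ))
          * (2 ^ (t * (t - 1) / 2) * ∏ k ∈ Finset.range t, (Nat.factorial k : ℤ)) := by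
      rw [exp_succ, pow_add, Finset.prod_range_succ]
      ring
    rw [hHc, hconst, mul_assoc, Finset.mul_sum]
    have hterm : ∀ y ∈ Fintype.piFinset S,
        (2 ^ (t * (t - 1) / 2) * ∏ k ∈ Finset.range t, (Nat.factorial k : ℤ)) * Hchain t y
          = (Matrix.vandermonde (fun i => y i.rev)).det := by
      intro y hy
      rw [ih y (hanti y hy) (hpar' y hy), prod_eq_det_vandermonde_rev]
    rw [Finset.sum_congr rfl hterm, hreindex, key t v hvmono hvpar,
      prod_eq_det_vandermonde_rev]

end StmtAux

/-- `H_t(x_1,…,x_t) = Δ(x_1,…,x_t) / (2^{t(t-1)/2} ∏_{k=1}^{t-1} k!)` for a strictly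
decreasing integer configuration `x` whose entries all have the same parity. -/
theorem stmt1 (t : ℕ) (ht : 1 ≤ t) (x : Fin t → ℤ) (hx : StrictAnti x)
    (hpar : ∀ i j, (2 : ℤ) ∣ (x i - x j)) :
    (2 ^ (t * (t - 1) / 2) * ∏ k ∈ Finset.range t, (Nat.factorial k : ℤ)) * Hchain t x =
      ∏ i : Fin t, ∏ j ∈ Finset.univ.filter (fun j => i < j), (x i - x j) :=
  StmtAux.main t x hx hpar
end

section
/- For integers t ≥ 1 and variables x_1, ..., x_{t+1}, the following summation identity holds: the sum over all integer tuples (y_1,...,y_t) with x_{i+1} < y_i < x_i for each i of the Vandermonde determinant Δ(y_1,...,y_t) equals (1/(2^t t!)) · Δ(x_1,...,x_{t+1}), whenever all x_i are integers of the same parity. -/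
open Finset Polynomial

def FF (n : ℕ) (a : ℤ) : ℤ := ∏ k ∈ Finset.range n, (a - 2 * k)

lemma vand_sign {n : ℕ} (v : Fin n → ℤ) :
    ∏ i : Fin n, ∏ j ∈ Finset.univ.filter (fun j => i < j), (v i - v j) =
      (-1) ^ (∑ i ∈ Finset.range n, i) * (Matrix.vandermonde v).det := by
  rw [Matrix.det_vandermonde]
  have h1 : ∀ i : Fin n, Finset.univ.filter (fun j => i < j) = Finset.Ioi i := by
    intro i; ext j; simp
  simp_rw [h1]
  have h2 : ∀ i : Fin n, ∏ j ∈ Finset.Ioi i, (v i - v j)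
      = (-1 : ℤ) ^ (Finset.Ioi i).card * ∏ j ∈ Finset.Ioi i, (v j - v i) := by
    intro i
    rw [← Finset.prod_const, ← Finset.prod_mul_distrib]
    apply Finset.prod_congr rfl; intros; ring
  simp_rw [h2]
  rw [Finset.prod_mul_distrib, Finset.prod_pow_eq_pow_sum]
  congr 2
  simp_rw [Fin.card_Ioi]
  rw [Fin.sum_univ_eq_sum_range (fun i => n - 1 - i), ← Finset.sum_range_reflect]
  apply Finset.sum_congr rfl
  intro j hj
  simp only [Finset.mem_range] at hj
  omega

noncomputable def QQ (c : ℤ) (j : ℕ) : Polynomial ℤ := ∏ k ∈ Finset.range j, (X - C (2*k + c))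

lemma QQ_monic (c : ℤ) (j : ℕ) : (QQ c j).Monic :=
  Polynomial.monic_prod_of_monic _ _ (fun k _ => Polynomial.monic_X_sub_C _)

lemma QQ_natDegree (c : ℤ) (j : ℕ) : (QQ c j).natDegree = j := by
  rw [QQ, Polynomial.natDegree_prod_of_monic _ _ (fun k _ => Polynomial.monic_X_sub_C _)]
  simp only [Polynomial.natDegree_X_sub_C]
  simp

lemma QQ_eval (c : ℤ) (j : ℕ) (z : ℤ) :
    Polynomial.eval z (QQ c j) = ∏ k ∈ Finset.range j, (z - (2*k + c)) := by
  simp [QQ, Polynomial.eval_prod]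

lemma QQ_eval_one (j : ℕ) (z : ℤ) : Polynomial.eval z (QQ 1 j) = FF j (z - 1) := by
  rw [QQ_eval, FF]
  apply Finset.prod_congr rfl; intros; ring

lemma QQ_eval_zero (j : ℕ) (z : ℤ) : Polynomial.eval z (QQ 0 j) = FF j z := by
  rw [QQ_eval, FF]
  apply Finset.prod_congr rfl; intros; ring


lemma FF_step (n : ℕ) (a : ℤ) :
    FF (n + 1) (a + 2) - FF (n + 1) a = 2 * ((n : ℤ) + 1) * FF n a := by
  have h1 : FF (n + 1) (a + 2) = FF n a * (a + 2) := by
    rw [FF, Finset.prod_range_succ']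
    congr 1
    · apply Finset.prod_congr rfl; intro k _; push_cast; ring
    · norm_num
  have h2 : FF (n + 1) a = FF n a * (a - 2 * n) := Finset.prod_range_succ _ _
  rw [h1, h2]; ring

lemma FF_sum (a : ℤ) (m n : ℕ) :
    2 * ∑ z ∈ (Finset.Ioo a (a + 2 * m)).filter (fun z => ¬ (2:ℤ) ∣ (z - a)),
        (((n : ℤ) + 1) * FF n (z - 1)) =
      FF (n + 1) (a + 2 * m) - FF (n + 1) a := by
  induction m with
  | zero => simp
  | succ m ih =>
      have hset : (Finset.Ioo a (a + 2 * ((m : ℤ)+1))).filter (fun z => ¬ (2:ℤ) ∣ (z - a)) =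
          insert (a + 2*m + 1)
            ((Finset.Ioo a (a + 2 * (m : ℤ))).filter (fun z => ¬ (2:ℤ) ∣ (z - a))) := by
        ext z
        simp only [Finset.mem_insert, Finset.mem_filter, Finset.mem_Ioo]
        omega
      have hnot : (a + 2*(m:ℤ) + 1) ∉
          ((Finset.Ioo a (a + 2 * (m:ℤ))).filter (fun z => ¬ (2:ℤ) ∣ (z - a))) := by
        simp only [Finset.mem_filter, Finset.mem_Ioo]
        omega
      push_cast at ih ⊢
      rw [hset, Finset.sum_insert hnot, mul_add, ih]
      have hstep := FF_step n (a + 2*m)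
      have e1 : a + 2*(m:ℤ) + 1 - 1 = a + 2*m := by ring
      have e2 : a + 2 * ((m:ℤ) + 1) = a + 2*m + 2 := by ring
      rw [e1, e2]
      linarith

open Finset in
/-- Summing the Vandermonde determinant `Δ(y_1,…,y_t)` over all lattice tuples
`(y_1,…,y_t)` with `x_{i+1} < y_i < x_i` (the `y_i` of parity opposite to the
common parity of the `x_i`) gives `Δ(x_1,…,x_{t+1}) / (2^t t!)`. -/
theorem stmt2 (t : ℕ) (ht : 1 ≤ t) (x : Fin (t + 1) → ℤ) (hx : StrictAnti x)
    (hpar : ∀ i j, (2 : ℤ) ∣ (x i - x j)) :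
    (2 ^ t * (Nat.factorial t : ℤ)) *
      ∑ y ∈ Fintype.piFinset (fun i : Fin t =>
          (Finset.Ioo (x i.succ) (x i.castSucc)).filter
            (fun z => ¬ (2 ∣ (z - x i.castSucc)))),
        ∏ i : Fin t, ∏ j ∈ Finset.univ.filter (fun j => i < j), (y i - y j) =
    ∏ i : Fin (t + 1), ∏ j ∈ Finset.univ.filter (fun j => i < j), (x i - x j) := by
  classical
  set E : ℕ := ∑ i ∈ Finset.range t, i with hE
  set S : Fin t → Finset ℤ := fun i : Fin t =>
    (Finset.Ioo (x i.succ) (x i.castSucc)).filter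
      (fun z => ¬ (2 ∣ (z - x i.castSucc))) with hS
  set gg : ℤ → Fin t → ℤ := fun z j => (((j : ℕ) : ℤ) + 1) * FF (j : ℕ) (z - 1) with hgg
  have Key1 : ∀ (i j : Fin t),
      2 * (∑ z ∈ S i, gg z j) = FF ((j : ℕ) + 1) (x i.castSucc) - FF ((j : ℕ) + 1) (x i.succ) := by
    intro i j
    have hlt : x i.succ < x i.castSucc := hx (Fin.castSucc_lt_succ (i := i))
    obtain ⟨c, hc⟩ := hpar i.castSucc i.succ
    obtain ⟨m, hm⟩ : ∃ m : ℕ, x i.castSucc = x i.succ + 2 * m := ⟨c.toNat, by omega⟩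
    have hSi : S i = (Finset.Ioo (x i.succ) (x i.succ + 2 * (m : ℤ))).filter
        (fun z => ¬ (2:ℤ) ∣ (z - x i.succ)) := by
      rw [hS]
      ext z
      simp only [Finset.mem_filter, Finset.mem_Ioo, hm]
      omega
    rw [hSi, hgg, hm]
    exact FF_sum (x i.succ) m (j : ℕ)
  -- matrices
  set D : Matrix (Fin t) (Fin t) ℤ := Matrix.of fun i j =>
    FF ((j : ℕ) + 1) (x i.castSucc) - FF ((j : ℕ) + 1) (x i.succ) with hD
  set K : Matrix (Fin t) (Fin t) ℤ := Matrix.of fun i j => ∑ z ∈ S i, gg z j with hK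
  have hDK : D.det = 2 ^ t * K.det := by
    have h1 : D = Matrix.of fun i j => (2 : ℤ) * K i j := by
      ext i j
      simp only [hD, hK, Matrix.of_apply]
      rw [← Key1 i j]
    rw [h1, Matrix.det_mul_column (fun _ => (2:ℤ)) K]
    simp
  have hsum : ∑ y ∈ Fintype.piFinset S, (Matrix.of fun i j => gg (y i) j).det = K.det := by
    have h := (Matrix.detRowAlternating :
        (Fin t → ℤ) [⋀^Fin t]→ₗ[ℤ] ℤ).toMultilinearMap.map_sum_finset (fun _ z => gg z) S
    have hKrows : K = fun i => ∑ z ∈ S i, gg z := by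
      ext i j
      simp [hK, Finset.sum_apply]
    calc ∑ y ∈ Fintype.piFinset S, (Matrix.of fun i j => gg (y i) j).det
        = ∑ y ∈ Fintype.piFinset S,
            (Matrix.detRowAlternating : (Fin t → ℤ) [⋀^Fin t]→ₗ[ℤ] ℤ) (fun i => gg (y i)) := rfl
      _ = (Matrix.detRowAlternating : (Fin t → ℤ) [⋀^Fin t]→ₗ[ℤ] ℤ)
            (fun i => ∑ z ∈ S i, gg z) := h.symm
      _ = K.det := by rw [hKrows]; rfl
  have hfact : (∏ j : Fin t, (((j : ℕ) : ℤ) + 1)) = (Nat.factorial t : ℤ) := by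
    rw [← Finset.prod_range_add_one_eq_factorial t]
    push_cast
    exact Fin.prod_univ_eq_prod_range (fun n => ((n : ℤ) + 1)) t
  have hty : ∀ y : Fin t → ℤ,
      (Nat.factorial t : ℤ) * (∏ i : Fin t, ∏ j ∈ Finset.univ.filter (fun j => i < j), (y i - y j))
      = (-1) ^ E * (Matrix.of fun i j => gg (y i) j).det := by
    intro y
    rw [vand_sign y, Matrix.det_eval_matrixOfPolynomials_eq_det_vandermonde y
        (fun j => QQ 1 (j : ℕ)) (fun j => QQ_natDegree 1 (j : ℕ)) (fun j => QQ_monic 1 (j : ℕ))]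
    have h2 : (Matrix.of fun i j => gg (y i) j).det
        = (∏ j : Fin t, (((j : ℕ) : ℤ) + 1)) *
          (Matrix.of fun (i j : Fin t) => Polynomial.eval (y i) (QQ 1 (j : ℕ))).det := by
      rw [← Matrix.det_mul_row (fun j : Fin t => (((j : ℕ) : ℤ) + 1))]
      congr 1
      ext i j
      simp [hgg, QQ_eval_one]
    rw [h2, hfact]
    ring
  -- RHS side
  set N : Matrix (Fin (t+1)) (Fin (t+1)) ℤ := Matrix.of fun i j => FF (j : ℕ) (x i) with hN
  have hvx : (∏ i : Fin (t + 1), ∏ j ∈ Finset.univ.filter (fun j => i < j), (x i - x j))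
      = (-1) ^ (E + t) * N.det := by
    rw [vand_sign x, Matrix.det_eval_matrixOfPolynomials_eq_det_vandermonde x
        (fun j => QQ 0 (j : ℕ)) (fun j => QQ_natDegree 0 (j : ℕ)) (fun j => QQ_monic 0 (j : ℕ))]
    rw [hE, Finset.sum_range_succ]
    congr 2
    ext i j
    simp [hN, QQ_eval_zero]
  set Smat : Matrix (Fin (t+1)) (Fin (t+1)) ℤ := Matrix.of fun i j =>
    Fin.cases (N 0 j) (fun i' => N i'.succ j - N i'.castSucc j) i with hSmat
  have hNS : N.det = Smat.det := by
    apply Matrix.det_eq_of_forall_row_eq_smul_add_pred (c := fun _ => (1:ℤ))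
    · intro j; simp [hSmat]
    · intro i j
      simp only [hSmat, Matrix.of_apply, Fin.cases_succ]
      ring
  have hz0 : ∀ i : Fin (t + 1), N i 0 = 1 := by
    intro i
    simp [hN, FF]
  have hSdet : Smat.det = (Smat.submatrix Fin.succ Fin.succ).det := by
    rw [Matrix.det_succ_column_zero, Fin.sum_univ_succ]
    have h00 : Smat 0 0 = 1 := by simp [hSmat, hz0]
    have hzz : ∀ i : Fin t, Smat i.succ 0 = 0 := by
      intro i
      simp [hSmat, hz0]
    simp [h00, hzz, Fin.succAbove_zero]
  have hminor : Smat.submatrix Fin.succ Fin.succ = -D := by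
    ext i j
    simp only [Matrix.submatrix_apply, hSmat, Matrix.of_apply, Fin.cases_succ,
      Matrix.neg_apply, hD, hN, Fin.val_succ]
    ring
  have hmd : (Smat.submatrix Fin.succ Fin.succ).det = (-1) ^ t * D.det := by
    rw [hminor, Matrix.det_neg]
    simp
  have hL : (2 ^ t * (Nat.factorial t : ℤ)) *
      ∑ y ∈ Fintype.piFinset S,
        ∏ i : Fin t, ∏ j ∈ Finset.univ.filter (fun j => i < j), (y i - y j)
      = (-1) ^ E * D.det := by
    calc (2 ^ t * (Nat.factorial t : ℤ)) *
        ∑ y ∈ Fintype.piFinset S,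
          ∏ i : Fin t, ∏ j ∈ Finset.univ.filter (fun j => i < j), (y i - y j)
        = 2 ^ t * ∑ y ∈ Fintype.piFinset S, ((Nat.factorial t : ℤ) *
            ∏ i : Fin t, ∏ j ∈ Finset.univ.filter (fun j => i < j), (y i - y j)) := by
          rw [mul_assoc, Finset.mul_sum]
      _ = 2 ^ t * ∑ y ∈ Fintype.piFinset S,
            ((-1) ^ E * (Matrix.of fun i j => gg (y i) j).det) := by
          congr 1
          exact Finset.sum_congr rfl fun y _ => hty y
      _ = (-1) ^ E * (2 ^ t * ∑ y ∈ Fintype.piFinset S,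
            (Matrix.of fun i j => gg (y i) j).det) := by
          rw [← Finset.mul_sum]
          ring
      _ = (-1) ^ E * D.det := by rw [hsum, ← hDK]
  rw [hL, hvx, hNS, hSdet, hmd]
  have h4 : ((-1 : ℤ)) ^ t * (-1) ^ t = 1 := by
    rw [← pow_add, ← two_mul, pow_mul]
    norm_num
  conv_rhs => rw [show ((-1 : ℤ)) ^ (E + t) * ((-1) ^ t * D.det)
    = ((-1) ^ t * (-1) ^ t) * ((-1) ^ E * D.det) by rw [pow_add]; ring]
  rw [h4, one_mul]
end

section
/- For a nonnegative integer a and n ≥ 0, the shifted Jacobi polynomial satisfies P̃_n^{(0,a)}(x) = (n!/(n+a)!) · (d/dx)^a (x^a P̃_n^{(a,0)}(x)). -/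
open Polynomial Finset

/-- The shifted Jacobi polynomial `P̃_n^{(a,b)}(x) = P_n^{(a,b)}(1-2x)`, defined by the
Rodrigues formula `P̃_n^{(a,b)}(x) = (1/n!) x^{-a} (1-x)^{-b} (d/dx)^n [x^{n+a}(1-x)^{n+b}]`. -/
noncomputable def Ptilde (n : ℕ) (a b : ℝ) (x : ℝ) : ℝ :=
  (1 / (Nat.factorial n : ℝ)) * x ^ (-a) * (1 - x) ^ (-b) *
    iteratedDeriv n (fun t : ℝ => t ^ ((n : ℝ) + a) * (1 - t) ^ ((n : ℝ) + b)) x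

lemma polyEval_iteratedDeriv (m : ℕ) (p : ℝ[X]) (x : ℝ) :
    iteratedDeriv m (fun t : ℝ => p.eval t) x = (derivative^[m] p).eval x := by
  induction m generalizing p x with
  | zero => simp
  | succ m ih =>
    have h : iteratedDeriv m (fun t : ℝ => p.eval t) = fun t : ℝ => (derivative^[m] p).eval t :=
      funext fun t => ih p t
    rw [iteratedDeriv_succ, h, Function.iterate_succ_apply']
    exact Polynomial.deriv (p := derivative^[m] p)

lemma iterate_derivative_one_sub_X_pow (m j : ℕ) :
    derivative^[j] ((1 - X : ℝ[X]) ^ m) =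
      ((-1 : ℝ) ^ j * (m.descFactorial j : ℝ)) • (1 - X) ^ (m - j) := by
  induction j with
  | zero => simp
  | succ j ih =>
    rw [Function.iterate_succ_apply', ih, derivative_smul, derivative_pow]
    have h1 : derivative (1 - X : ℝ[X]) = -1 := by
      rw [derivative_sub, derivative_one, derivative_X, zero_sub]
    rw [h1, Nat.descFactorial_succ, Nat.sub_sub, mul_neg_one, ← smul_eq_C_mul, smul_neg,
      smul_smul, ← neg_smul]
    congr 1
    push_cast
    ring

lemma fact_ne (m : ℕ) : ((m.factorial : ℝ)) ≠ 0 := Nat.cast_ne_zero.mpr m.factorial_ne_zero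

lemma key (a n : ℕ) :
    (((n + a).factorial : ℝ)) • derivative^[n] ((X : ℝ[X]) ^ n * (1 - X) ^ (n + a)) =
      ((n.factorial : ℝ)) • ((1 - X : ℝ[X]) ^ a *
        derivative^[n + a] ((X : ℝ[X]) ^ (n + a) * (1 - X) ^ n)) := by
  rw [iterate_derivative_mul, iterate_derivative_mul]
  have hz : ∀ i ∈ Finset.range a, (n + a).choose (n.succ + i) •
      (derivative^[n + a - (n.succ + i)] ((X : ℝ[X]) ^ (n + a)) *
        derivative^[n.succ + i] ((1 - X : ℝ[X]) ^ n)) = 0 := by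
    intro i _
    rw [iterate_derivative_one_sub_X_pow,
      Nat.descFactorial_eq_zero_iff_lt.mpr (by omega), Nat.cast_zero, mul_zero, zero_smul,
      mul_zero, smul_zero]
  rw [show (n + a).succ = n.succ + a from by omega, Finset.sum_range_add,
    Finset.sum_eq_zero hz, add_zero, Finset.smul_sum, Finset.mul_sum, Finset.smul_sum]
  refine Finset.sum_congr rfl fun k hk => ?_
  have hkn : k ≤ n := Nat.lt_succ_iff.mp (Finset.mem_range.mp hk)
  rw [iterate_derivative_X_pow_eq_smul, iterate_derivative_X_pow_eq_smul,
    iterate_derivative_one_sub_X_pow, iterate_derivative_one_sub_X_pow,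
    show n - (n - k) = k from Nat.sub_sub_self hkn,
    show n + a - (n + a - k) = k from Nat.sub_sub_self (le_trans hkn (Nat.le_add_right n a))]
  simp only [← Nat.cast_smul_eq_nsmul ℝ, smul_mul_assoc, mul_smul_comm, smul_smul]
  rw [show ((1 - X : ℝ[X]) ^ a * (X ^ k * (1 - X) ^ (n - k))) = X ^ k * (1 - X) ^ (n + a - k) from
    by rw [show n + a - k = a + (n - k) from by omega, pow_add]; ring]
  congr 1
  -- real coefficient identity
  have d1 : ((n.descFactorial (n - k) : ℝ)) = n.factorial / k.factorial := by
    rw [eq_div_iff (fact_ne k), mul_comm]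
    have := Nat.factorial_mul_descFactorial (Nat.sub_le n k)
    rw [Nat.sub_sub_self hkn] at this
    exact_mod_cast this
  have d2 : (((n + a).descFactorial k : ℝ)) = (n + a).factorial / (n + a - k).factorial := by
    rw [eq_div_iff (fact_ne _), mul_comm]
    exact_mod_cast Nat.factorial_mul_descFactorial (le_trans hkn (Nat.le_add_right n a))
  have d3 : (((n + a).descFactorial (n + a - k) : ℝ)) = (n + a).factorial / k.factorial := by
    rw [eq_div_iff (fact_ne k), mul_comm]
    have := Nat.factorial_mul_descFactorial (Nat.sub_le (n + a) k)
    rw [Nat.sub_sub_self (le_trans hkn (Nat.le_add_right n a))] at this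
    exact_mod_cast this
  have d4 : ((n.descFactorial k : ℝ)) = n.factorial / (n - k).factorial := by
    rw [eq_div_iff (fact_ne _), mul_comm]
    exact_mod_cast Nat.factorial_mul_descFactorial hkn
  rw [Nat.cast_choose ℝ hkn, Nat.cast_choose ℝ (le_trans hkn (Nat.le_add_right n a)),
    d1, d2, d3, d4]
  field_simp

/-- For a nonnegative integer `a`:
`P̃_n^{(0,a)}(x) = (n!/(n+a)!) (d/dx)^a (x^a P̃_n^{(a,0)}(x))`. -/
theorem stmt7 (a n : ℕ) (x : ℝ) (hx : x ∈ Set.Ioo (0 : ℝ) 1) :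
    Ptilde n 0 a x =
      ((Nat.factorial n : ℝ) / (Nat.factorial (n + a))) *
        iteratedDeriv a (fun y : ℝ => y ^ a * Ptilde n a 0 y) x := by
  obtain ⟨hx0, hx1⟩ := hx
  set P : ℝ[X] := (X : ℝ[X]) ^ (n + a) * (1 - X) ^ n with hPdef
  set Q : ℝ[X] := (X : ℝ[X]) ^ n * (1 - X) ^ (n + a) with hQdef
  have hinnerP : (fun t : ℝ => t ^ ((n : ℝ) + (a : ℝ)) * (1 - t) ^ ((n : ℝ) + 0))
      = fun t : ℝ => P.eval t := by
    funext t
    rw [add_zero, show ((n : ℝ) + (a : ℝ)) = ((n + a : ℕ) : ℝ) from by push_cast; ring,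
      Real.rpow_natCast, Real.rpow_natCast]
    simp [hPdef]
  have hinnerQ : (fun t : ℝ => t ^ ((n : ℝ) + 0) * (1 - t) ^ ((n : ℝ) + (a : ℝ)))
      = fun t : ℝ => Q.eval t := by
    funext t
    rw [add_zero, show ((n : ℝ) + (a : ℝ)) = ((n + a : ℕ) : ℝ) from by push_cast; ring,
      Real.rpow_natCast, Real.rpow_natCast]
    simp [hQdef]
  have hPt : ∀ y : ℝ, Ptilde n a 0 y
      = 1 / (n.factorial : ℝ) * y ^ (-(a : ℝ)) * (derivative^[n] P).eval y := by
    intro y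
    rw [Ptilde, neg_zero, Real.rpow_zero, mul_one, hinnerP, polyEval_iteratedDeriv]
  have hout : (fun y : ℝ => y ^ a * Ptilde n a 0 y) =ᶠ[nhds x]
      (fun y : ℝ => (Polynomial.C (1 / (n.factorial : ℝ)) * derivative^[n] P).eval y) := by
    filter_upwards [Ioo_mem_nhds hx0 hx1] with y hy
    rw [hPt y, eval_mul, eval_C, Real.rpow_neg hy.1.le, Real.rpow_natCast]
    have hya : (y : ℝ) ^ a ≠ 0 := pow_ne_zero a (ne_of_gt hy.1)
    field_simp
  have hkey := congrArg (fun p : ℝ[X] => p.eval x) (key a n)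
  simp only [eval_smul, smul_eq_mul, eval_mul, eval_pow, eval_sub, eval_one, eval_X] at hkey
  rw [← hPdef, ← hQdef] at hkey
  rw [Ptilde, neg_zero, Real.rpow_zero, mul_one, hinnerQ, polyEval_iteratedDeriv,
    Filter.EventuallyEq.iteratedDeriv_eq a hout, polyEval_iteratedDeriv,
    iterate_derivative_C_mul, eval_mul, eval_C,
    ← Function.iterate_add_apply, show a + n = n + a from by omega]
  have h1x : (0 : ℝ) < 1 - x := by linarith
  rw [Real.rpow_neg h1x.le, Real.rpow_natCast]
  have h1xa : ((1 - x) : ℝ) ^ a ≠ 0 := pow_ne_zero a (ne_of_gt h1x)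
  field_simp
  linear_combination hkey
end

section
/- Let p ≤ s < t ≤ q be integers, x ∈ (0,1), and l an integer with p−l ≥ 0. Then ∫_0^x [(x−u)^{t−s−1}/(t−s−1)!] u^{s−p} P̃_{p−l}^{(s−p, q−s)}(u) du = [(p−l+s−p)!/(p−l+t−p)!] · x^{t−p} · P̃_{p−l}^{(t−p, q−t)}(x); equivalently, for nonnegative integers n, α and positive integer d: ∫_0^x [(x−u)^{d−1}/(d−1)!] u^{α} P̃_n^{(α, β)}(u) du = [(n+α)!/(n+α+d)!] x^{α+d} P̃_n^{(α+d, β−d)}(x). -/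
open Set Filter intervalIntegral Topology
open scoped ContDiff

noncomputable def Fn (m : ℕ) (c : ℝ) : ℝ → ℝ := fun t => t ^ m * (1 - t) ^ c

lemma Fn_contDiffAt {m : ℕ} {c : ℝ} {t : ℝ} (ht : t < 1) : ContDiffAt ℝ ∞ (Fn m c) t := by
  have h0 : (1 : ℝ) - t ≠ 0 := ne_of_gt (by linarith)
  have h1 : ContDiffAt ℝ ∞ (fun s : ℝ => (1 - s) ^ c) t := by
    have := (Real.contDiffAt_rpow_const_of_ne (x := 1 - t) (p := c) (n := ∞) h0).comp t
      (contDiffAt_const.sub contDiffAt_id)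
    simpa [Function.comp_def] using this
  exact ((contDiff_id.pow m).contDiffAt).mul h1

lemma contDiffOn_deriv {f : ℝ → ℝ} {s : Set ℝ} (hs : IsOpen s) (h : ContDiffOn ℝ ∞ f s) :
    ContDiffOn ℝ ∞ (deriv f) s :=
  h.deriv_of_isOpen hs (by exact_mod_cast le_top)

lemma contDiffOn_iteratedDeriv {f : ℝ → ℝ} {s : Set ℝ} (hs : IsOpen s)
    (h : ContDiffOn ℝ ∞ f s) (k : ℕ) : ContDiffOn ℝ ∞ (iteratedDeriv k f) s := by
  induction k generalizing f with
  | zero => simpa [iteratedDeriv_zero] using h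
  | succ k ih =>
    rw [iteratedDeriv_succ']
    exact ih (contDiffOn_deriv hs h)

lemma Fn_contDiffOn (m : ℕ) (c : ℝ) : ContDiffOn ℝ ∞ (Fn m c) (Iio 1) :=
  fun t ht => (Fn_contDiffAt ht).contDiffWithinAt

lemma iter_hasDerivAt {m : ℕ} {c : ℝ} (k : ℕ) {t : ℝ} (ht : t < 1) :
    HasDerivAt (iteratedDeriv k (Fn m c)) (iteratedDeriv (k + 1) (Fn m c) t) t := by
  rw [iteratedDeriv_succ]
  have h := (contDiffOn_iteratedDeriv isOpen_Iio (Fn_contDiffOn m c) k).contDiffAt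
    (Iio_mem_nhds ht)
  exact (h.differentiableAt (by simp)).hasDerivAt

lemma iter_continuousAt {m : ℕ} {c : ℝ} (k : ℕ) {t : ℝ} (ht : t < 1) :
    ContinuousAt (iteratedDeriv k (Fn m c)) t :=
  ((contDiffOn_iteratedDeriv isOpen_Iio (Fn_contDiffOn m c) k).contDiffAt
    (Iio_mem_nhds ht)).continuousAt

lemma Fn_hasDerivAt {m : ℕ} {c : ℝ} {t : ℝ} (ht : t < 1) :
    HasDerivAt (Fn m c) ((m : ℝ) * Fn (m - 1) c t - c * Fn m (c - 1) t) t := by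
  have h0 : (1 : ℝ) - t ≠ 0 := ne_of_gt (by linarith)
  have h1 : HasDerivAt (fun s : ℝ => s ^ m) ((m : ℝ) * t ^ (m - 1)) t := hasDerivAt_pow m t
  have h2 : HasDerivAt (fun s : ℝ => (1 - s) ^ c) (c * (1 - t) ^ (c - 1) * (-1)) t := by
    have := (Real.hasDerivAt_rpow_const (x := 1 - t) (p := c) (Or.inl h0)).comp t
      ((hasDerivAt_id t).const_sub 1)
    simpa [Function.comp_def] using this
  have := h1.mul h2
  refine this.congr_deriv ?_
  simp only [Fn]
  ring

lemma key_s13 (n : ℕ) : ∀ (m : ℕ) (c : ℝ) (t : ℝ), t < 1 →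
    (1 - t) * iteratedDeriv (n + 1) (Fn m c) t + (c - n) * iteratedDeriv n (Fn m c) t
      = (m : ℝ) * iteratedDeriv n (Fn (m - 1) (c + 1)) t := by
  induction n with
  | zero =>
    intro m c t ht
    have h0 : (1 : ℝ) - t ≠ 0 := ne_of_gt (by linarith)
    have hd : iteratedDeriv 1 (Fn m c) t = (m : ℝ) * Fn (m - 1) c t - c * Fn m (c - 1) t := by
      rw [iteratedDeriv_one]
      exact (Fn_hasDerivAt ht).deriv
    rw [hd, iteratedDeriv_zero, iteratedDeriv_zero]
    simp only [Fn, Nat.cast_zero, sub_zero]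
    have e1 : (1 - t) ^ (c + 1) = (1 - t) ^ c * (1 - t) := Real.rpow_add_one h0 c
    have e2 : (1 - t) ^ c = (1 - t) ^ (c - 1) * (1 - t) := by
      rw [← Real.rpow_add_one h0, sub_add_cancel]
    rw [e1, e2]
    ring
  | succ n ih =>
    intro m c t ht
    set F := Fn m c with hF
    have hEq : Set.EqOn
        (fun s => (1 - s) * iteratedDeriv (n + 1) F s + (c - n) * iteratedDeriv n F s)
        (fun s => (m : ℝ) * iteratedDeriv n (Fn (m - 1) (c + 1)) s) (Iio (1 : ℝ)) :=
      fun s hs => ih m c s hs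
    have hmem : Iio (1 : ℝ) ∈ 𝓝 t := Iio_mem_nhds ht
    have hdeq :
        deriv (fun s => (1 - s) * iteratedDeriv (n + 1) F s + (c - n) * iteratedDeriv n F s) t
          = deriv (fun s => (m : ℝ) * iteratedDeriv n (Fn (m - 1) (c + 1)) s) t :=
      Filter.EventuallyEq.deriv_eq (Filter.eventuallyEq_of_mem hmem hEq)
    have hA : HasDerivAt (fun s : ℝ => 1 - s) (-1) t := (hasDerivAt_id t).const_sub 1
    have hB : HasDerivAt (iteratedDeriv (n + 1) F) (iteratedDeriv (n + 2) F t) t :=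
      iter_hasDerivAt (n + 1) ht
    have hC : HasDerivAt (iteratedDeriv n F) (iteratedDeriv (n + 1) F t) t :=
      iter_hasDerivAt n ht
    have hD : HasDerivAt (iteratedDeriv n (Fn (m - 1) (c + 1)))
        (iteratedDeriv (n + 1) (Fn (m - 1) (c + 1)) t) t := iter_hasDerivAt n ht
    have hL : HasDerivAt
        (fun s => (1 - s) * iteratedDeriv (n + 1) F s + (c - n) * iteratedDeriv n F s)
        ((-1) * iteratedDeriv (n + 1) F t + (1 - t) * iteratedDeriv (n + 2) F t
          + (c - n) * iteratedDeriv (n + 1) F t) t := by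
      exact (hA.mul hB).add (hC.const_mul (c - (n : ℝ)))
    have hR : HasDerivAt (fun s => (m : ℝ) * iteratedDeriv n (Fn (m - 1) (c + 1)) s)
        ((m : ℝ) * iteratedDeriv (n + 1) (Fn (m - 1) (c + 1)) t) t := hD.const_mul _
    rw [hL.deriv, hR.deriv] at hdeq
    have : ((n : ℝ) + 1) = ((n + 1 : ℕ) : ℝ) := by push_cast; ring
    push_cast
    show (1 - t) * iteratedDeriv (n + 1 + 1) F t + (c - ((n : ℝ) + 1)) * iteratedDeriv (n + 1) F t
      = (m : ℝ) * iteratedDeriv (n + 1) (Fn (m - 1) (c + 1)) t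
    have h2 : iteratedDeriv (n + 1 + 1) F t = iteratedDeriv (n + 2) F t := by norm_num
    rw [h2]
    linarith [hdeq]

/-- Leibniz rule for multiplication by the identity. -/
lemma linear_leibniz (m : ℕ) (c : ℝ) : ∀ (j : ℕ) (t : ℝ), t < 1 →
    iteratedDeriv (j + 1) (fun s => s * Fn m c s) t
      = t * iteratedDeriv (j + 1) (Fn m c) t + ((j : ℝ) + 1) * iteratedDeriv j (Fn m c) t := by
  intro j
  induction j with
  | zero =>
    intro t ht
    have h : HasDerivAt (fun s => s * Fn m c s)
        (1 * Fn m c t + t * iteratedDeriv 1 (Fn m c) t) t := by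
      have h1 : HasDerivAt (Fn m c) (iteratedDeriv 1 (Fn m c) t) t := iter_hasDerivAt 0 ht
      exact (hasDerivAt_id t).mul h1
    rw [show (0:ℕ) + 1 = 1 from rfl, iteratedDeriv_one, h.deriv, iteratedDeriv_one,
      iteratedDeriv_zero]
    push_cast; ring
  | succ j ih =>
    intro t ht
    have hEq : Set.EqOn (iteratedDeriv (j + 1) (fun s => s * Fn m c s))
        (fun s => s * iteratedDeriv (j + 1) (Fn m c) s
          + ((j : ℝ) + 1) * iteratedDeriv j (Fn m c) s) (Iio (1 : ℝ)) :=
      fun s hs => ih s hs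
    have hmem : Iio (1 : ℝ) ∈ 𝓝 t := Iio_mem_nhds ht
    have hdeq : deriv (iteratedDeriv (j + 1) (fun s => s * Fn m c s)) t
        = deriv (fun s => s * iteratedDeriv (j + 1) (Fn m c) s
          + ((j : ℝ) + 1) * iteratedDeriv j (Fn m c) s) t :=
      Filter.EventuallyEq.deriv_eq (Filter.eventuallyEq_of_mem hmem hEq)
    have hB : HasDerivAt (iteratedDeriv (j + 1) (Fn m c))
        (iteratedDeriv (j + 2) (Fn m c) t) t := iter_hasDerivAt (j + 1) ht
    have hC : HasDerivAt (iteratedDeriv j (Fn m c))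
        (iteratedDeriv (j + 1) (Fn m c) t) t := iter_hasDerivAt j ht
    have hR : HasDerivAt (fun s => s * iteratedDeriv (j + 1) (Fn m c) s
          + ((j : ℝ) + 1) * iteratedDeriv j (Fn m c) s)
        (1 * iteratedDeriv (j + 1) (Fn m c) t + t * iteratedDeriv (j + 2) (Fn m c) t
          + ((j : ℝ) + 1) * iteratedDeriv (j + 1) (Fn m c) t) t :=
      ((hasDerivAt_id t).mul hB).add (hC.const_mul _)
    rw [hR.deriv] at hdeq
    rw [iteratedDeriv_succ, hdeq]
    push_cast
    have h2 : iteratedDeriv (j + 1 + 1) (Fn m c) t = iteratedDeriv (j + 2) (Fn m c) t := by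
      norm_num
    rw [h2]
    ring

lemma iteratedDeriv_Fn_zero : ∀ (n m : ℕ) (c : ℝ), n < m → iteratedDeriv n (Fn m c) 0 = 0 := by
  intro n
  induction n with
  | zero =>
    intro m c hm
    simp [iteratedDeriv_zero, Fn, zero_pow (by omega : m ≠ 0)]
  | succ n ih =>
    intro m c hm
    have hm1 : 1 ≤ m := by omega
    have hfe : Fn m c = fun s => s * Fn (m - 1) c s := by
      funext s
      simp only [Fn]
      rw [← mul_assoc, ← pow_succ', Nat.sub_add_cancel hm1]
    rw [hfe, linear_leibniz (m - 1) c n 0 (by norm_num)]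
    rw [ih (m - 1) c (by omega)]
    ring

section Main

variable (n α : ℕ) (β : ℝ)

noncomputable def psi (k : ℕ) : ℝ → ℝ := fun t =>
  ((Nat.factorial (n + α) : ℝ) / (Nat.factorial (n + α + k)) / (Nat.factorial n)) *
    (1 - t) ^ ((k : ℝ) - β) * iteratedDeriv n (Fn (n + α + k) ((n : ℝ) + β - k)) t

lemma psi_continuousAt (k : ℕ) {t : ℝ} (ht : t < 1) : ContinuousAt (psi n α β k) t := by
  have h0 : (1 : ℝ) - t ≠ 0 := ne_of_gt (by linarith)
  have h1 : ContinuousAt (fun s : ℝ => (1 - s) ^ ((k : ℝ) - β)) t := by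
    have := ((Real.contDiffAt_rpow_const_of_ne (x := 1 - t) (p := (k : ℝ) - β) (n := ∞)
      h0).comp t (contDiffAt_const.sub contDiffAt_id)).continuousAt
    simpa [Function.comp_def] using this
  exact (continuousAt_const.mul h1).mul (iter_continuousAt n ht)

lemma psi_zero_val {k : ℕ} (hk : 1 ≤ k) : psi n α β k 0 = 0 := by
  unfold psi
  rw [iteratedDeriv_Fn_zero n (n + α + k) _ (by omega)]
  ring

lemma psi_hasDerivAt (k : ℕ) {t : ℝ} (ht : t < 1) :
    HasDerivAt (psi n α β (k + 1)) (psi n α β k t) t := by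
  have h0 : (1 : ℝ) - t ≠ 0 := ne_of_gt (by linarith)
  set C : ℝ := (Nat.factorial (n + α) : ℝ) / (Nat.factorial (n + α + (k + 1)))
    / (Nat.factorial n) with hC
  have hg : HasDerivAt (fun s : ℝ => (1 - s) ^ (((k : ℝ) + 1) - β))
      ((((k : ℝ) + 1) - β) * (1 - t) ^ (((k : ℝ) + 1) - β - 1) * (-1)) t := by
    have := (Real.hasDerivAt_rpow_const (x := 1 - t) (p := ((k : ℝ) + 1) - β)
      (Or.inl h0)).comp t ((hasDerivAt_id t).const_sub 1)
    simpa [Function.comp_def] using this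
  have hh : HasDerivAt (iteratedDeriv n (Fn (n + α + (k + 1)) ((n : ℝ) + β - (k + 1))))
      (iteratedDeriv (n + 1) (Fn (n + α + (k + 1)) ((n : ℝ) + β - (k + 1))) t) t :=
    iter_hasDerivAt n ht
  have H := ((hg.mul hh).const_mul C)
  have hpsi : psi n α β (k + 1) = fun t =>
      C * ((1 - t) ^ (((k : ℝ) + 1) - β) *
        iteratedDeriv n (Fn (n + α + (k + 1)) ((n : ℝ) + β - (k + 1))) t) := by
    funext s
    unfold psi
    push_cast
    ring
  rw [hpsi]
  -- now rewrite the derivative value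
  have hkey := key_s13 n (n + α + (k + 1)) ((n : ℝ) + β - ((k : ℝ) + 1)) t ht
  have hm1 : n + α + (k + 1) - 1 = n + α + k := by omega
  rw [hm1] at hkey
  have hc1 : (n : ℝ) + β - ((k : ℝ) + 1) + 1 = (n : ℝ) + β - k := by ring
  rw [hc1] at hkey
  have hexp : (((k : ℝ) + 1) - β - 1) = ((k : ℝ) - β) := by ring
  have hsplit : (1 - t) ^ (((k : ℝ) + 1) - β) = (1 - t) ^ ((k : ℝ) - β) * (1 - t) := by
    rw [show ((k : ℝ) + 1) - β = ((k : ℝ) - β) + 1 by ring, Real.rpow_add_one h0]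
  have hval : C * ((((k : ℝ) + 1) - β) * (1 - t) ^ (((k : ℝ) + 1) - β - 1) * (-1) *
        iteratedDeriv n (Fn (n + α + (k + 1)) ((n : ℝ) + β - (k + 1))) t
      + (1 - t) ^ (((k : ℝ) + 1) - β) *
        iteratedDeriv (n + 1) (Fn (n + α + (k + 1)) ((n : ℝ) + β - (k + 1))) t)
      = psi n α β k t := by
    rw [hexp, hsplit]
    have hfact : (Nat.factorial (n + α + (k + 1)) : ℝ)
        = ((n + α + (k + 1) : ℕ) : ℝ) * (Nat.factorial (n + α + k)) := by
      rw [show n + α + (k + 1) = (n + α + k) + 1 by ring, Nat.factorial_succ]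
      push_cast; ring
    have hne1 : (Nat.factorial (n + α + k) : ℝ) ≠ 0 := by positivity
    have hne2 : ((n + α + (k + 1) : ℕ) : ℝ) ≠ 0 := by positivity
    have hne3 : (Nat.factorial n : ℝ) ≠ 0 := by positivity
    have hCM : C * ((n + α + (k + 1) : ℕ) : ℝ)
        = (Nat.factorial (n + α) : ℝ) / (Nat.factorial (n + α + k)) / (Nat.factorial n) := by
      rw [hC, hfact]
      field_simp
    have hcast : ((n : ℝ) + β - ((k : ℝ) + 1)) = ((n : ℝ) + β - ((k + 1 : ℕ) : ℝ)) := by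
      push_cast; ring
    unfold psi
    push_cast
    linear_combination (C * (1 - t) ^ ((k : ℝ) - β)) * hkey
      + ((1 - t) ^ ((k : ℝ) - β) *
          iteratedDeriv n (Fn (n + α + k) ((n : ℝ) + β - (k : ℕ))) t) * hCM
  rw [hval] at H
  exact H

end Main

section Integration

variable {n α : ℕ} {β : ℝ} {x : ℝ}

lemma psi_contOn (hx1 : x < 1) (k : ℕ) : ContinuousOn (psi n α β k) (Icc 0 x) :=
  fun u hu => (psi_continuousAt n α β k (lt_of_le_of_lt hu.2 hx1)).continuousWithinAt

lemma intBase (hx0 : 0 < x) (hx1 : x < 1) (k : ℕ) :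
    ∫ u in (0:ℝ)..x, psi n α β k u = psi n α β (k + 1) x := by
  have hftc := intervalIntegral.integral_eq_sub_of_hasDeriv_right_of_le hx0.le
    (psi_contOn hx1 (k + 1))
    (fun u hu => (psi_hasDerivAt n α β k (lt_trans hu.2 hx1)).hasDerivWithinAt)
    ((by rw [uIcc_of_le hx0.le]; exact psi_contOn hx1 k :
      ContinuousOn (psi n α β k) (uIcc 0 x)).intervalIntegrable)
  rw [psi_zero_val n α β (by omega), sub_zero] at hftc
  exact hftc

lemma intStep (hx0 : 0 < x) (hx1 : x < 1) (j k : ℕ) :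
    ∫ u in (0:ℝ)..x, ((x - u) ^ (j + 1) / (Nat.factorial (j + 1) : ℝ)) * psi n α β k u
      = ∫ u in (0:ℝ)..x, ((x - u) ^ j / (Nat.factorial j : ℝ)) * psi n α β (k + 1) u := by
  set A : ℝ → ℝ := fun u => ((x - u) ^ j / (Nat.factorial j : ℝ)) * psi n α β (k + 1) u with hA
  set B : ℝ → ℝ := fun u =>
    ((x - u) ^ (j + 1) / (Nat.factorial (j + 1) : ℝ)) * psi n α β k u with hB
  set G : ℝ → ℝ := fun u =>
    -(((x - u) ^ (j + 1) / (Nat.factorial (j + 1) : ℝ)) * psi n α β (k + 1) u) with hG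
  have hfact : ((Nat.factorial (j + 1) : ℝ)) = ((j : ℝ) + 1) * (Nat.factorial j) := by
    rw [Nat.factorial_succ]; push_cast; ring
  have hfne : (Nat.factorial j : ℝ) ≠ 0 := by positivity
  have hGderiv : ∀ u ∈ Ioo (0:ℝ) x, HasDerivAt G (A u - B u) u := by
    intro u hu
    have hu1 : u < 1 := lt_trans hu.2 hx1
    have h1 : HasDerivAt (fun u : ℝ => (x - u) ^ (j + 1))
        (((j : ℝ) + 1) * (x - u) ^ j * (-1)) u := by
      have := (hasDerivAt_pow (j + 1) (x - u)).comp u ((hasDerivAt_id u).const_sub x)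
      simpa [Function.comp_def] using this
    have h2 := psi_hasDerivAt n α β k hu1
    have h := ((h1.div_const ((Nat.factorial (j + 1) : ℝ))).mul h2).neg
    refine h.congr_deriv ?_
    rw [hA, hB]
    rw [hfact]
    field_simp
    ring
  have hGcont : ContinuousOn G (Icc 0 x) := by
    apply ContinuousOn.neg
    exact ((((continuous_const.sub continuous_id).pow _).continuousOn).div_const _).mul
      (psi_contOn hx1 (k + 1))
  have hAcont : ContinuousOn A (Icc 0 x) :=
    ((((continuous_const.sub continuous_id).pow _).continuousOn).div_const _).mul
      (psi_contOn hx1 (k + 1))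
  have hBcont : ContinuousOn B (Icc 0 x) :=
    ((((continuous_const.sub continuous_id).pow _).continuousOn).div_const _).mul
      (psi_contOn hx1 k)
  have hintA : IntervalIntegrable A MeasureTheory.volume 0 x :=
    (by rw [uIcc_of_le hx0.le]; exact hAcont : ContinuousOn A (uIcc 0 x)).intervalIntegrable
  have hintB : IntervalIntegrable B MeasureTheory.volume 0 x :=
    (by rw [uIcc_of_le hx0.le]; exact hBcont : ContinuousOn B (uIcc 0 x)).intervalIntegrable
  have hftc := intervalIntegral.integral_eq_sub_of_hasDeriv_right_of_le hx0.le hGcont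
    (fun u hu => (hGderiv u hu).hasDerivWithinAt)
    (hintA.sub hintB)
  have hGx : G x = 0 := by simp [hG]
  have hG0 : G 0 = 0 := by
    rw [hG]
    simp [psi_zero_val n α β (by omega : 1 ≤ k + 1)]
  rw [hGx, hG0, sub_zero, intervalIntegral.integral_sub hintA hintB] at hftc
  have : ∫ u in (0:ℝ)..x, A u = ∫ u in (0:ℝ)..x, B u := by linarith
  exact this.symm

end Integration

lemma fn_fun_eq (n a' : ℕ) (b : ℝ) :
    (fun t : ℝ => t ^ ((n : ℝ) + (a' : ℝ)) * (1 - t) ^ ((n : ℝ) + b))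
      = Fn (n + a') ((n : ℝ) + b) := by
  funext t
  rw [show (n : ℝ) + (a' : ℝ) = ((n + a' : ℕ) : ℝ) by push_cast; ring, Real.rpow_natCast]
  rfl

lemma ptilde_eq (n a' : ℕ) (b : ℝ) {u : ℝ} (hu : 0 < u) :
    (u : ℝ) ^ a' * Ptilde n a' b u
      = (1 / (Nat.factorial n : ℝ)) * (1 - u) ^ (-b) *
        iteratedDeriv n (Fn (n + a') ((n : ℝ) + b)) u := by
  unfold Ptilde
  rw [fn_fun_eq n a' b, Real.rpow_neg hu.le (a' : ℝ), Real.rpow_natCast u a']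
  have hne : (u : ℝ) ^ a' ≠ 0 := pow_ne_zero _ hu.ne'
  field_simp

lemma psi0_eq (n α : ℕ) (β : ℝ) {u : ℝ} (hu0 : 0 ≤ u) (hu1 : u < 1) :
    u ^ α * Ptilde n α β u = psi n α β 0 u := by
  have hfd : (Nat.factorial (n + α) : ℝ) ≠ 0 := by positivity
  rcases eq_or_lt_of_le hu0 with h0 | h0
  · subst h0
    cases α with
    | zero =>
      unfold Ptilde psi
      rw [fn_fun_eq n 0 β]
      simp only [pow_zero, Nat.cast_zero, neg_zero, Real.rpow_zero, sub_zero, Real.one_rpow,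
        Nat.add_zero, one_mul, mul_one]
      try rw [div_self (by positivity : (Nat.factorial n : ℝ) ≠ 0)]
      try ring
    | succ a =>
      rw [zero_pow (by omega : a + 1 ≠ 0), zero_mul]
      unfold psi
      rw [iteratedDeriv_Fn_zero n (n + (a + 1) + 0) ((n : ℝ) + β - ((0 : ℕ) : ℝ)) (by omega)]
      ring
  · rw [ptilde_eq n α β h0]
    unfold psi
    rw [Nat.add_zero]
    simp only [Nat.cast_zero, zero_sub, sub_zero, div_self hfd]
    try ring

/-- For nonnegative integers `n, α`, a positive integer `d` and real `β`:
`∫_0^x ((x-u)^{d-1}/(d-1)!) u^α P̃_n^{(α,β)}(u) du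
  = ((n+α)!/(n+α+d)!) x^{α+d} P̃_n^{(α+d, β-d)}(x)`. -/
theorem stmt13 (n α d : ℕ) (hd : 1 ≤ d) (β : ℝ) (x : ℝ) (hx : x ∈ Set.Ioo (0 : ℝ) 1) :
    ∫ u in (0 : ℝ)..x, ((x - u) ^ (d - 1) / (Nat.factorial (d - 1) : ℝ)) * u ^ α *
        Ptilde n α β u =
      ((Nat.factorial (n + α) : ℝ) / (Nat.factorial (n + α + d))) * x ^ (α + d) *
        Ptilde n (α + d) (β - d) x := by
  obtain ⟨hx0, hx1⟩ := hx
  have hchain : ∀ (j k : ℕ),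
      (∫ u in (0:ℝ)..x, ((x - u) ^ j / (Nat.factorial j : ℝ)) * psi n α β k u)
        = psi n α β (j + k + 1) x := by
    intro j
    induction j with
    | zero =>
      intro k
      simp only [pow_zero, Nat.factorial_zero, Nat.cast_one, div_one, one_mul, zero_add]
      exact intBase hx0 hx1 k
    | succ j ih =>
      intro k
      rw [intStep hx0 hx1 j k, ih (k + 1)]
      congr 1
      omega
  have hL : (∫ u in (0 : ℝ)..x, ((x - u) ^ (d - 1) / (Nat.factorial (d - 1) : ℝ)) * u ^ α *
        Ptilde n α β u)
      = ∫ u in (0:ℝ)..x, ((x - u) ^ (d - 1) / (Nat.factorial (d - 1) : ℝ)) * psi n α β 0 u := by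
    apply intervalIntegral.integral_congr
    intro u hu
    rw [uIcc_of_le hx0.le] at hu
    have := psi0_eq n α β hu.1 (lt_of_le_of_lt hu.2 hx1)
    simp only [mul_assoc]
    rw [this]
  rw [hL, hchain (d - 1) 0, show d - 1 + 0 + 1 = d by omega]
  -- now the right-hand side
  have h1 := ptilde_eq n (α + d) (β - (d : ℝ)) hx0
  have hcast : ((α : ℝ) + (d : ℝ)) = ((α + d : ℕ) : ℝ) := by push_cast; ring
  rw [hcast, mul_assoc, h1]
  unfold psi
  rw [show n + (α + d) = n + α + d by ring, show -(β - (d : ℝ)) = (d : ℝ) - β by ring,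
    show (n : ℝ) + (β - (d : ℝ)) = (n : ℝ) + β - (d : ℝ) by ring]
  ring
end

section
/- For a normalized Hermitian corank-1 projection construction: let a_1 > a_2 > ... > a_n be reals, s_1, ..., s_n positive integers, and (q_1,...,q_n) have the Dirichlet distribution D[s_1,...,s_n]. Then the n−1 zeros λ_1 > ... > λ_{n−1} of the random rational function Σ_{i=1}^n q_i/(x − a_i) interlace with the a_i (a_1 > λ_1 > a_2 > ... > λ_{n−1} > a_n) and their joint density is [Γ(s_1+...+s_n)/(Γ(s_1)···Γ(s_n))] · [∏_{1≤j<k≤n−1}(λ_j − λ_k)] / [∏_{1≤j<k≤n}(a_j − a_k)^{s_j+s_k−1}] · ∏_{j=1}^{n−1}∏_{p=1}^{n}|λ_j − a_p|^{s_p−1} on the interlacing region. -/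
open MeasureTheory


open MeasureTheory Finset Polynomial

namespace Stmt17Aux

variable {m : ℕ}

/-- denominator `d i = ∏_{k≠i} (a i - a k)` -/
noncomputable def dP (a : Fin (m+1) → ℝ) (i : Fin (m+1)) : ℝ :=
  ∏ k ∈ Finset.univ.erase i, (a i - a k)

lemma dP_ne_zero {a : Fin (m+1) → ℝ} (ha : Function.Injective a) (i : Fin (m+1)) :
    dP a i ≠ 0 := by
  refine Finset.prod_ne_zero_iff.2 fun k hk => ?_
  have : k ≠ i := (Finset.mem_erase.1 hk).1
  exact sub_ne_zero.2 fun h => this (ha h.symm)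

lemma eval_prod_erase (a : Fin (m+1) → ℝ) (i : Fin (m+1)) (x : ℝ) :
    (∏ k ∈ Finset.univ.erase i, (X - C (a k))).eval x = ∏ k ∈ Finset.univ.erase i, (x - a k) := by
  simp [eval_prod]

lemma natDegree_prod_erase (a : Fin (m+1) → ℝ) (i : Fin (m+1)) :
    (∏ k ∈ Finset.univ.erase i, (X - C (a k))).natDegree = m := by
  rw [natDegree_prod_of_monic _ _ (fun k _ => monic_X_sub_C _)]
  simp [Finset.card_erase_of_mem]

lemma monic_prod_erase (a : Fin (m+1) → ℝ) (i : Fin (m+1)) :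
    (∏ k ∈ Finset.univ.erase i, (X - C (a k))).Monic :=
  monic_prod_of_monic _ _ fun k _ => monic_X_sub_C _

lemma coeff_prod_erase (a : Fin (m+1) → ℝ) (i : Fin (m+1)) :
    (∏ k ∈ Finset.univ.erase i, (X - C (a k))).coeff m = 1 := by
  have := (monic_prod_erase a i).coeff_natDegree
  rwa [natDegree_prod_erase] at this

/-- Lagrange interpolation at the nodes `a i`. -/
lemma lagrange_poly {a : Fin (m+1) → ℝ} (ha : Function.Injective a) (P : ℝ[X])
    (hP : P.natDegree ≤ m) :
    P = ∑ i, C (P.eval (a i) / dP a i) * ∏ k ∈ Finset.univ.erase i, (X - C (a k)) := by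
  set Q : ℝ[X] := ∑ i, C (P.eval (a i) / dP a i) * ∏ k ∈ Finset.univ.erase i, (X - C (a k)) with hQ
  have hQdeg : Q.natDegree ≤ m := by
    refine le_trans (natDegree_sum_le _ _) ?_
    simp only [Finset.fold_max_le]
    refine ⟨Nat.zero_le _, fun i _ => ?_⟩
    exact le_trans (natDegree_mul_le) (by simp [natDegree_prod_erase a i])
  have heval : ∀ i, (P - Q).eval (a i) = 0 := by
    intro i
    have : Q.eval (a i) = P.eval (a i) := by
      rw [hQ, eval_finset_sum]
      rw [Finset.sum_eq_single i]
      · rw [eval_mul, eval_prod_erase, eval_C, ← dP, div_mul_cancel₀ _ (dP_ne_zero ha i)]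
      · intro k _ hk
        rw [eval_mul, eval_prod_erase, Finset.prod_eq_zero (Finset.mem_erase.2 ⟨hk.symm, Finset.mem_univ i⟩) (by ring), mul_zero]
      · simp
    simp [this]
  have h0 : P - Q = 0 := by
    apply Polynomial.eq_zero_of_natDegree_lt_card_of_eval_eq_zero _ ha heval
    calc (P - Q).natDegree ≤ max P.natDegree Q.natDegree := natDegree_sub_le _ _
    _ ≤ m := max_le hP hQdeg
    _ < Fintype.card (Fin (m+1)) := by simp
  exact sub_eq_zero.1 h0
  
end Stmt17Aux

namespace Stmt17Aux

/-- `Q λ i = ∏_j (a i - λ j) / d i` -/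
noncomputable def QQ (a : Fin (m+1) → ℝ) (l : Fin m → ℝ) (i : Fin (m+1)) : ℝ :=
  (∏ j, (a i - l j)) / dP a i

lemma nodal_eval (l : Fin m → ℝ) (x : ℝ) :
    (∏ j, (X - C (l j)) : ℝ[X]).eval x = ∏ j, (x - l j) := by simp [eval_prod]

lemma nodal_monic (l : Fin m → ℝ) : (∏ j, (X - C (l j)) : ℝ[X]).Monic :=
  monic_prod_of_monic _ _ fun k _ => monic_X_sub_C _

lemma nodal_natDegree (l : Fin m → ℝ) : (∏ j, (X - C (l j)) : ℝ[X]).natDegree = m := by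
  rw [natDegree_prod_of_monic _ _ (fun k _ => monic_X_sub_C _)]; simp

lemma QQ_eq_eval (a : Fin (m+1) → ℝ) (l : Fin m → ℝ) (i : Fin (m+1)) :
    QQ a l i = (∏ j, (X - C (l j)) : ℝ[X]).eval (a i) / dP a i := by
  rw [QQ, nodal_eval]

/-- the `Q`s sum to 1 -/
lemma sum_QQ {a : Fin (m+1) → ℝ} (ha : Function.Injective a) (l : Fin m → ℝ) :
    ∑ i, QQ a l i = 1 := by
  have h := lagrange_poly ha (∏ j, (X - C (l j))) (le_of_eq (nodal_natDegree l))
  have hc := congrArg (fun P : ℝ[X] => P.coeff m) h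
  simp only [finset_sum_coeff, coeff_C_mul, coeff_prod_erase] at hc
  have h1 : (∏ j, (X - C (l j)) : ℝ[X]).coeff m = 1 := by
    have := (nodal_monic l).coeff_natDegree
    rwa [nodal_natDegree] at this
  rw [h1] at hc
  simpa [QQ_eq_eval] using hc.symm

/-- partial fraction identity -/
lemma pf_identity {a : Fin (m+1) → ℝ} (ha : Function.Injective a) (l : Fin m → ℝ) (x : ℝ)
    (hx : ∀ i, x ≠ a i) :
    ∑ i, QQ a l i / (x - a i) = (∏ j, (x - l j)) / ∏ i, (x - a i) := by
  have hne : ∀ i, x - a i ≠ 0 := fun i => sub_ne_zero.2 (hx i)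
  have hD : (∏ i, (x - a i)) ≠ 0 := Finset.prod_ne_zero_iff.2 fun i _ => hne i
  rw [eq_div_iff hD, Finset.sum_mul]
  have h := lagrange_poly ha (∏ j, (X - C (l j))) (le_of_eq (nodal_natDegree l))
  have he := congrArg (fun P : ℝ[X] => P.eval x) h
  simp only [eval_finset_sum, eval_mul, eval_C, eval_prod_erase, nodal_eval] at he
  rw [he]
  refine Finset.sum_congr rfl fun i _ => ?_
  show QQ a l i / (x - a i) * ∏ i, (x - a i) = QQ a l i * ∏ k ∈ Finset.univ.erase i, (x - a k)
  rw [← Finset.mul_prod_erase _ _ (Finset.mem_univ i), div_mul_eq_mul_div, eq_comm,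
    eq_div_iff (hne i)]
  ring

/-- inversion: if `q` sums to 1 and the `l j` are distinct zeros of `Σ q i/(x - a i)`,
then `q = QQ a l`. -/
lemma inversion {a : Fin (m+1) → ℝ} (ha : Function.Injective a) {q : Fin (m+1) → ℝ}
    (hq : ∑ i, q i = 1) {l : Fin m → ℝ} (hl : Function.Injective l)
    (hla : ∀ j i, l j ≠ a i) (hz : ∀ j, ∑ i, q i / (l j - a i) = 0) :
    q = QQ a l := by
  set R : ℝ[X] := ∑ i, C (q i) * ∏ k ∈ Finset.univ.erase i, (X - C (a k)) with hR
  have hRdeg : R.natDegree ≤ m := by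
    refine le_trans (natDegree_sum_le _ _) ?_
    simp only [Finset.fold_max_le]
    exact ⟨Nat.zero_le _, fun i _ =>
      le_trans (natDegree_mul_le) (by simp [natDegree_prod_erase a i])⟩
  have hRcoeff : R.coeff m = 1 := by
    rw [hR]
    simp only [finset_sum_coeff, coeff_C_mul, coeff_prod_erase, mul_one]
    exact hq
  have hReval : ∀ i, R.eval (a i) = q i * dP a i := by
    intro i
    rw [hR, eval_finset_sum, Finset.sum_eq_single i]
    · rw [eval_mul, eval_C, eval_prod_erase]; rfl
    · intro k _ hk
      rw [eval_mul, eval_prod_erase,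
        Finset.prod_eq_zero (Finset.mem_erase.2 ⟨hk.symm, Finset.mem_univ i⟩) (by ring), mul_zero]
    · simp
  have hRroot : ∀ j, R.eval (l j) = 0 := by
    intro j
    have hne : ∀ i, l j - a i ≠ 0 := fun i => sub_ne_zero.2 (hla j i)
    have hD : (∏ i, (l j - a i)) ≠ 0 := Finset.prod_ne_zero_iff.2 fun i _ => hne i
    have : R.eval (l j) = (∑ i, q i / (l j - a i)) * ∏ i, (l j - a i) := by
      rw [Finset.sum_mul, hR, eval_finset_sum]
      refine Finset.sum_congr rfl fun i _ => ?_
      rw [eval_mul, eval_C, eval_prod_erase, ← Finset.mul_prod_erase _ _ (Finset.mem_univ i),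
        div_mul_eq_mul_div, eq_div_iff (hne i)]
      ring
    rw [this, hz j, zero_mul]
  -- R = nodal polynomial of l
  have hRP : R = ∏ j, (X - C (l j)) := by
    have hsub : R - ∏ j, (X - C (l j)) = 0 := by
      have hdegle : (R - ∏ j, (X - C (l j))).natDegree ≤ m :=
        le_trans (natDegree_sub_le _ _) (max_le hRdeg (le_of_eq (nodal_natDegree l)))
      have hcoeffm : (R - ∏ j, (X - C (l j))).coeff m = 0 := by
        rw [coeff_sub, hRcoeff]
        have h1 : (∏ j, (X - C (l j)) : ℝ[X]).coeff m = 1 := by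
          have := (nodal_monic l).coeff_natDegree
          rwa [nodal_natDegree] at this
        rw [h1, sub_self]
      by_cases h0 : R - ∏ j, (X - C (l j)) = 0
      · exact h0
      · apply Polynomial.eq_zero_of_natDegree_lt_card_of_eval_eq_zero _ hl
        · intro j
          rw [eval_sub, hRroot j, nodal_eval, zero_sub, neg_eq_zero]
          exact Finset.prod_eq_zero (Finset.mem_univ j) (sub_self _)
        · have hne0 : (R - ∏ j, (X - C (l j))).leadingCoeff ≠ 0 := leadingCoeff_ne_zero.2 h0
          have hnd : (R - ∏ j, (X - C (l j))).natDegree ≠ m := fun h =>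
            hne0 (by rw [Polynomial.leadingCoeff, h]; exact hcoeffm)
          simpa using lt_of_le_of_ne hdegle hnd
    exact sub_eq_zero.1 hsub
  funext i
  have h := hReval i
  rw [hRP] at h
  rw [QQ_eq_eval, h, mul_div_cancel_right₀ _ (dP_ne_zero ha i)]

end Stmt17Aux

namespace Stmt17Aux
variable {m : ℕ}

/-- a zero of `Σ q i/(x - a i)` with positive `q` lies in some gap -/
lemma zero_in_gap {a : Fin (m+1) → ℝ} (ha : StrictAnti a) {q : Fin (m+1) → ℝ}
    (hq : ∀ i, 0 < q i) {x : ℝ} (hx : ∀ i, x ≠ a i)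
    (hz : ∑ i, q i / (x - a i) = 0) :
    ∃ i : Fin m, a i.succ < x ∧ x < a i.castSucc := by
  -- x < a 0
  have hlt0 : x < a 0 := by
    by_contra hge
    push_neg at hge
    have h0 : ∀ i, 0 < q i / (x - a i) := by
      intro i
      apply div_pos (hq i)
      have : a i ≤ a 0 := ha.antitone (Fin.zero_le i)
      rcases lt_or_eq_of_le (this.trans hge) with h | h
      · linarith
      · exact absurd h.symm (hx i)
    exact absurd hz (ne_of_gt (Finset.sum_pos (fun i _ => h0 i) Finset.univ_nonempty))
  have hgtl : a (Fin.last m) < x := by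
    by_contra hge
    push_neg at hge
    have h0 : ∀ i, q i / (x - a i) < 0 := by
      intro i
      apply div_neg_of_pos_of_neg (hq i)
      have : a (Fin.last m) ≤ a i := ha.antitone (Fin.le_last i)
      rcases lt_or_eq_of_le (hge.trans this) with h | h
      · linarith
      · exact absurd h (hx i)
    exact absurd hz (ne_of_lt (Finset.sum_neg (fun i _ => h0 i) Finset.univ_nonempty))
  -- take the largest i with a i > x
  classical
  have hS : (Finset.univ.filter (fun i : Fin (m+1) => x < a i)).Nonempty := by
    refine ⟨0, ?_⟩; simp [hlt0]
  set i₀ := Finset.max' _ hS with hi₀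
  have hi₀mem : x < a i₀ := by
    have := Finset.max'_mem _ hS
    simpa using (Finset.mem_filter.1 this).2
  have hi₀ne : i₀ ≠ Fin.last m := by
    intro h
    rw [h] at hi₀mem
    linarith
  -- i₀ = castSucc j for some j
  obtain ⟨j, hj⟩ := Fin.exists_castSucc_eq.2 hi₀ne
  refine ⟨j, ?_, ?_⟩
  · -- a j.succ < x : j.succ not in S since it is > i₀
    have hnot : ¬ x < a j.succ := by
      intro hmem
      have hle : j.succ ≤ i₀ :=
        Finset.le_max' (Finset.univ.filter (fun i : Fin (m+1) => x < a i)) j.succ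
          (Finset.mem_filter.2 ⟨Finset.mem_univ _, hmem⟩)
      rw [← hj] at hle
      exact absurd (lt_of_lt_of_le (Fin.castSucc_lt_succ (i := j)) hle) (lt_irrefl _)
    push_neg at hnot
    rcases lt_or_eq_of_le hnot with h | h
    · exact h
    · exact absurd h.symm (hx j.succ)
  · rw [hj]; exact hi₀mem

/-- at most one zero per gap -/
lemma uniq_in_gap {a : Fin (m+1) → ℝ} (ha : StrictAnti a) {q : Fin (m+1) → ℝ}
    (hq : ∀ i, 0 < q i) {x y : ℝ} {i : Fin m}
    (hx1 : a i.succ < x) (hx2 : x < a i.castSucc) (hy1 : a i.succ < y) (hy2 : y < a i.castSucc)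
    (hxy : x < y)
    (hzx : ∑ k, q k / (x - a k) = 0) (hzy : ∑ k, q k / (y - a k) = 0) : False := by
  have key : ∀ k : Fin (m+1), 0 < (x - a k) * (y - a k) := by
    intro k
    rcases le_or_gt k i.castSucc with h | h
    · have hak : a i.castSucc ≤ a k := ha.antitone h
      have h1 : x - a k < 0 := by linarith
      have h2 : y - a k < 0 := by linarith
      exact mul_pos_of_neg_of_neg h1 h2
    · have : i.succ ≤ k := h
      have hak : a k ≤ a i.succ := ha.antitone this
      have h1 : 0 < x - a k := by linarith
      have h2 : 0 < y - a k := by linarith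
      exact mul_pos h1 h2
  have hpos : 0 < ∑ k, q k * ((y - x) / ((x - a k) * (y - a k))) := by
    apply Finset.sum_pos _ Finset.univ_nonempty
    intro k _
    exact mul_pos (hq k) (div_pos (by linarith) (key k))
  have heq : ∑ k, q k * ((y - x) / ((x - a k) * (y - a k)))
      = (∑ k, q k / (x - a k)) - ∑ k, q k / (y - a k) := by
    rw [← Finset.sum_sub_distrib]
    refine Finset.sum_congr rfl fun k _ => ?_
    have h1 : x - a k ≠ 0 := by
      intro hh; have := key k; rw [hh, zero_mul] at this; exact lt_irrefl _ this
    have h2 : y - a k ≠ 0 := by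
      intro hh; have := key k; rw [hh, mul_zero] at this; exact lt_irrefl _ this
    field_simp
    ring
  rw [heq, hzx, hzy, sub_zero] at hpos
  exact lt_irrefl _ hpos

/-- two strictly antitone maps `Fin m → ℝ` with nested ranges agree -/
lemma strictAnti_unique {f g : Fin m → ℝ} (hf : StrictAnti f) (hg : StrictAnti g)
    (hr : Set.range f ⊆ Set.range g) : f = g := by
  classical
  set s : Finset ℝ := Finset.univ.image g with hs
  have hcard : s.card = m := by
    rw [hs, Finset.card_image_of_injective _ hg.injective, Finset.card_univ, Fintype.card_fin]
  have hrev : StrictAnti (Fin.rev : Fin m → Fin m) := fun i j h => Fin.rev_lt_rev.2 h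
  have hf' : StrictMono (fun j => f (Fin.rev j)) := fun i j h => hf (hrev h)
  have hg' : StrictMono (fun j => g (Fin.rev j)) := fun i j h => hg (hrev h)
  have hfs : ∀ x, f (Fin.rev x) ∈ s := by
    intro x
    obtain ⟨y, hy⟩ := hr ⟨Fin.rev x, rfl⟩
    rw [hs]
    exact Finset.mem_image.2 ⟨y, Finset.mem_univ y, hy⟩
  have hgs : ∀ x, g (Fin.rev x) ∈ s := fun x =>
    Finset.mem_image.2 ⟨Fin.rev x, Finset.mem_univ _, rfl⟩
  have h1 := Finset.orderEmbOfFin_unique hcard hfs hf'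
  have h2 := Finset.orderEmbOfFin_unique hcard hgs hg'
  funext j
  have := congrFun (h1.trans h2.symm) (Fin.rev j)
  simpa [Fin.rev_rev] using this

end Stmt17Aux

namespace Stmt17Aux

/-- membership in the interlacing region implies strict antitonicity -/
lemma V_strictAnti {a : Fin (m+1) → ℝ} (ha : StrictAnti a) {l : Fin m → ℝ}
    (hl : ∀ j : Fin m, a j.succ < l j ∧ l j < a j.castSucc) : StrictAnti l := by
  intro j k hjk
  have h1 : k.castSucc ≥ j.succ := Fin.succ_le_castSucc_iff.2 hjk
  calc l k < a k.castSucc := (hl k).2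
  _ ≤ a j.succ := ha.antitone h1
  _ < l j := (hl j).1

/-- the pigeonhole: the ordered zeros interlace -/
lemma zeros_interlace {a : Fin (m+1) → ℝ} (ha : StrictAnti a) {q : Fin (m+1) → ℝ}
    (hq : ∀ i, 0 < q i) {l : Fin m → ℝ} (hl : StrictAnti l)
    (hla : ∀ j i, l j ≠ a i) (hz : ∀ j, ∑ i, q i / (l j - a i) = 0) :
    ∀ j : Fin m, a j.succ < l j ∧ l j < a j.castSucc := by
  have hgap : ∀ j : Fin m, ∃ i : Fin m, a i.succ < l j ∧ l j < a i.castSucc :=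
    fun j => zero_in_gap ha hq (hla j) (hz j)
  classical
  set g : Fin m → Fin m := fun j => Classical.choose (hgap j) with hg
  have hgspec : ∀ j, a (g j).succ < l j ∧ l j < a (g j).castSucc :=
    fun j => Classical.choose_spec (hgap j)
  have hmono : StrictMono g := by
    intro j k hjk
    have hlk : l k < l j := hl hjk
    rcases lt_trichotomy (g j) (g k) with h | h | h
    · exact h
    · exfalso
      exact uniq_in_gap ha hq (h ▸ (hgspec k).1) (h ▸ (hgspec k).2)
        (hgspec j).1 (hgspec j).2 hlk (hz k) (hz j)
    · exfalso
      have : a (g j).castSucc ≤ a (g k).succ := ha.antitone (Fin.succ_le_castSucc_iff.2 h)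
      have := ((hgspec j).2.trans_le this).trans (hgspec k).1
      exact absurd (this.trans hlk) (lt_irrefl _)
  have hid : g = id := by
    have hcard : (Finset.univ : Finset (Fin m)).card = m := by simp
    have h1 := Finset.orderEmbOfFin_unique hcard (fun x => Finset.mem_univ (g x)) hmono
    have h2 := Finset.orderEmbOfFin_unique hcard (fun x => Finset.mem_univ (id x : Fin m))
      strictMono_id
    exact h1.trans h2.symm
  intro j
  have := hgspec j
  rwa [hid] at this

lemma prod_erase_succAbove (g : Fin (m+1) → ℝ) (i : Fin (m+1)) :
    ∏ k ∈ Finset.univ.erase i, g k = ∏ j : Fin m, g (i.succAbove j) := by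
  refine (Finset.prod_bij (fun (j : Fin m) _ => i.succAbove j) ?_ ?_ ?_ ?_).symm
  · intro j _
    exact Finset.mem_erase.2 ⟨Fin.succAbove_ne i j, Finset.mem_univ _⟩
  · intro j _ k _ h
    exact Fin.succAbove_right_injective h
  · intro k hk
    obtain ⟨j, hj⟩ := Fin.exists_succAbove_eq (Finset.mem_erase.1 hk).1
    exact ⟨j, Finset.mem_univ _, hj⟩
  · intro j _; rfl

/-- positivity of the inverse coordinates on the interlacing region -/
lemma QQ_pos {a : Fin (m+1) → ℝ} (ha : StrictAnti a) {l : Fin m → ℝ}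
    (hl : ∀ j : Fin m, a j.succ < l j ∧ l j < a j.castSucc) (i : Fin (m+1)) :
    0 < QQ a l i := by
  rw [QQ, dP, prod_erase_succAbove, ← Finset.prod_div_distrib]
  apply Finset.prod_pos
  intro j _
  rcases lt_or_ge j.castSucc i with h | h
  · rw [Fin.succAbove_of_castSucc_lt _ _ h]
    have hnum : a i ≤ a j.succ := ha.antitone (Fin.castSucc_lt_iff_succ_le.1 h)
    have h1 : a i - l j < 0 := by linarith [(hl j).1]
    have h2 : a i - a j.castSucc < 0 := sub_neg.2 (ha h)
    exact div_pos_of_neg_of_neg h1 h2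
  · rw [Fin.succAbove_of_le_castSucc _ _ h]
    have hnum : a j.castSucc ≤ a i := ha.antitone h
    have h1 : 0 < a i - l j := by linarith [(hl j).2]
    have h2 : 0 < a i - a j.succ := sub_pos.2 (ha (lt_of_le_of_lt h (Fin.castSucc_lt_succ (i := j))))
    exact div_pos h1 h2

end Stmt17Aux


namespace Stmt17Aux

/-- the inverse map `V → U` -/
noncomputable def Psi (a : Fin (m+1) → ℝ) (l : Fin m → ℝ) (j : Fin m) : ℝ := QQ a l j.castSucc

def Uset (m : ℕ) : Set (Fin m → ℝ) := {p | (∀ i, 0 < p i) ∧ ∑ i, p i < 1}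
def Vset (a : Fin (m+1) → ℝ) : Set (Fin m → ℝ) :=
  {l | ∀ j : Fin m, a j.succ < l j ∧ l j < a j.castSucc}

lemma snoc_Psi {a : Fin (m+1) → ℝ} (ha : Function.Injective a) (l : Fin m → ℝ) :
    Fin.snoc (α := fun _ => ℝ) (Psi a l) (1 - ∑ j, Psi a l j) = QQ a l := by
  funext i
  refine Fin.lastCases ?_ ?_ i
  · rw [Fin.snoc_last]
    have h := sum_QQ ha l
    rw [Fin.sum_univ_castSucc] at h
    have : ∑ j, Psi a l j = ∑ j : Fin m, QQ a l j.castSucc := rfl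
    rw [this]
    linarith
  · intro j
    rw [Fin.snoc_castSucc]
    rfl

lemma Psi_mem_U {a : Fin (m+1) → ℝ} (ha : StrictAnti a) {l : Fin m → ℝ}
    (hl : l ∈ Vset a) : Psi a l ∈ Uset m := by
  constructor
  · intro j; exact QQ_pos ha hl j.castSucc
  · have h := sum_QQ ha.injective l
    rw [Fin.sum_univ_castSucc] at h
    have hpos := QQ_pos ha hl (Fin.last m)
    have : ∑ j, Psi a l j = ∑ j : Fin m, QQ a l j.castSucc := rfl
    rw [this]
    linarith

section WithLambda

variable {a_ : Fin (m+1) → ℝ}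
variable {Λ : (Fin m → ℝ) → (Fin m → ℝ)}
variable (hΛ : ∀ p : Fin m → ℝ, ((∀ i, 0 < p i) ∧ ∑ i, p i < 1) →
      StrictAnti (Λ p) ∧ (∀ j i, Λ p j ≠ a_ i) ∧
        (∀ j : Fin m,
          ∑ i : Fin (m + 1),
            (Fin.snoc (α := fun _ => ℝ) p (1 - ∑ i, p i) i) / (Λ p j - a_ i) = 0))

/-- positivity of snoc coordinates -/
lemma snoc_pos {p : Fin m → ℝ} (hp : p ∈ Uset m) (i : Fin (m+1)) :
    0 < Fin.snoc (α := fun _ => ℝ) p (1 - ∑ j, p j) i := by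
  refine Fin.lastCases ?_ ?_ i
  · rw [Fin.snoc_last]; linarith [hp.2]
  · intro j; rw [Fin.snoc_castSucc]; exact hp.1 j

lemma sum_snoc_eq_one (p : Fin m → ℝ) :
    ∑ i, Fin.snoc (α := fun _ => ℝ) p (1 - ∑ j, p j) i = 1 := by
  rw [Fin.sum_snoc]; ring

include hΛ

/-- part 1: the zeros interlace -/
lemma lambda_mem_V (ha : StrictAnti a_) {p : Fin m → ℝ} (hp : p ∈ Uset m) :
    Λ p ∈ Vset a_ := by
  obtain ⟨h1, h2, h3⟩ := hΛ p hp
  exact zeros_interlace ha (snoc_pos hp) h1 h2 h3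

/-- `Ψ ∘ Λ = id` on `U` -/
lemma Psi_lambda (ha : StrictAnti a_) {p : Fin m → ℝ} (hp : p ∈ Uset m) :
    Psi a_ (Λ p) = p := by
  obtain ⟨h1, h2, h3⟩ := hΛ p hp
  have hinv := inversion ha.injective (sum_snoc_eq_one p) h1.injective h2 h3
  funext j
  have := congrFun hinv j.castSucc
  rw [Fin.snoc_castSucc] at this
  exact this.symm

/-- `Λ ∘ Ψ = id` on `V` -/
lemma lambda_Psi (ha : StrictAnti a_) {l : Fin m → ℝ} (hl : l ∈ Vset a_) :
    Λ (Psi a_ l) = l := by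
  have hpU := Psi_mem_U ha hl
  obtain ⟨h1, h2, h3⟩ := hΛ (Psi a_ l) hpU
  have hsnoc := snoc_Psi ha.injective l
  -- each Λ (Psi l) j is one of the l k
  have hrange : Set.range (Λ (Psi a_ l)) ⊆ Set.range l := by
    rintro x ⟨j, rfl⟩
    have hzero := h3 j
    rw [hsnoc] at hzero
    have hne : ∀ i, Λ (Psi a_ l) j ≠ a_ i := h2 j
    rw [pf_identity ha.injective l _ hne] at hzero
    have hD : (∏ i, (Λ (Psi a_ l) j - a_ i)) ≠ 0 :=
      Finset.prod_ne_zero_iff.2 fun i _ => sub_ne_zero.2 (hne i)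
    rw [_root_.div_eq_zero_iff] at hzero
    rcases hzero with h | h
    · obtain ⟨k, _, hk⟩ := Finset.prod_eq_zero_iff.1 h
      exact ⟨k, (sub_eq_zero.1 hk).symm⟩
    · exact absurd h hD
  exact strictAnti_unique h1 (V_strictAnti ha hl) hrange

end WithLambda

end Stmt17Aux


namespace Stmt17Aux

open Matrix

/-- Jacobian matrix of `Psi` -/
noncomputable def Jmat (a : Fin (m+1) → ℝ) (l : Fin m → ℝ) : Matrix (Fin m) (Fin m) ℝ :=
  Matrix.of fun i j =>
    -(∏ k ∈ Finset.univ.erase j, (a i.castSucc - l k)) / dP a i.castSucc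

noncomputable def JCLM (a : Fin (m+1) → ℝ) (l : Fin m → ℝ) : (Fin m → ℝ) →L[ℝ] (Fin m → ℝ) :=
  LinearMap.toContinuousLinearMap (Matrix.toLin' (Jmat a l))

lemma JCLM_det (a : Fin (m+1) → ℝ) (l : Fin m → ℝ) : (JCLM a l).det = (Jmat a l).det := by
  rw [ContinuousLinearMap.det, JCLM, LinearMap.coe_toContinuousLinearMap, LinearMap.det_toLin']

lemma hasFDerivAt_Psi (a : Fin (m+1) → ℝ) (l : Fin m → ℝ) :
    HasFDerivAt (Psi a) (JCLM a l) l := by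
  apply hasFDerivAt_pi'.2
  intro i
  have hcoord : ∀ j : Fin m, HasFDerivAt (fun x : Fin m → ℝ => a i.castSucc - x j)
      (-(ContinuousLinearMap.proj j : (Fin m → ℝ) →L[ℝ] ℝ)) l :=
    fun j => (ContinuousLinearMap.proj j : (Fin m → ℝ) →L[ℝ] ℝ).hasFDerivAt.const_sub _
  have hprod := HasFDerivAt.finset_prod (u := Finset.univ)
    (g := fun j (x : Fin m → ℝ) => a i.castSucc - x j)
    (g' := fun j => -(ContinuousLinearMap.proj j : (Fin m → ℝ) →L[ℝ] ℝ))
    (fun j _ => hcoord j)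
  have hdiv := hprod.const_smul (dP a i.castSucc)⁻¹
  have : (fun x : Fin m → ℝ => (dP a i.castSucc)⁻¹ • ∏ j, (a i.castSucc - x j))
      = fun x => Psi a x i := by
    funext x; rw [Psi, QQ]; rw [smul_eq_mul]; ring
  change HasFDerivAt (fun x => (dP a i.castSucc)⁻¹ • ∏ j, (a i.castSucc - x j)) _ l at hdiv
  rw [this] at hdiv
  refine hdiv.congr_fderiv ?_
  symm
  ext v
  simp only [ContinuousLinearMap.coe_comp', Function.comp_apply,
    ContinuousLinearMap.proj_apply, JCLM, LinearMap.coe_toContinuousLinearMap',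
    Matrix.toLin'_apply, Matrix.mulVec, dotProduct, Jmat, Matrix.of_apply,
    ContinuousLinearMap.coe_sum', Finset.sum_apply, ContinuousLinearMap.coe_smul',
    Pi.smul_apply, ContinuousLinearMap.neg_apply, smul_eq_mul]
  rw [Finset.mul_sum]
  refine Finset.sum_congr rfl fun j _ => ?_
  ring

end Stmt17Aux


namespace Stmt17Aux

open Matrix Polynomial

/-- coefficient matrix of the punctured nodal polynomials -/
noncomputable def Bmat (l : Fin m → ℝ) : Matrix (Fin m) (Fin m) ℝ :=
  Matrix.of fun t j => (∏ k ∈ Finset.univ.erase j, (X - C (l k))).coeff t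

/-- the matrix of punctured products at nodes `v` -/
noncomputable def Nmat (v l : Fin m → ℝ) : Matrix (Fin m) (Fin m) ℝ :=
  Matrix.of fun i j => ∏ k ∈ Finset.univ.erase j, (v i - l k)

lemma natDegree_erase_lt (l : Fin m → ℝ) (j : Fin m) :
    (∏ k ∈ Finset.univ.erase j, (X - C (l k))).natDegree < m := by
  rw [natDegree_prod_of_monic _ _ (fun k _ => monic_X_sub_C _)]
  simp only [natDegree_X_sub_C, Finset.sum_const, smul_eq_mul, mul_one]
  rw [Finset.card_erase_of_mem (Finset.mem_univ j), Finset.card_univ, Fintype.card_fin]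
  exact Nat.sub_lt (Fin.pos j) Nat.one_pos

lemma Nmat_eq (v l : Fin m → ℝ) : Nmat v l = vandermonde v * Bmat l := by
  ext i j
  rw [Matrix.mul_apply]
  have hev := Polynomial.eval_eq_sum_range' (natDegree_erase_lt l j) (v i)
  have : (∏ k ∈ Finset.univ.erase j, (X - C (l k))).eval (v i)
      = ∏ k ∈ Finset.univ.erase j, (v i - l k) := by simp [eval_prod]
  rw [this] at hev
  rw [Nmat, Matrix.of_apply, hev, ← Fin.sum_univ_eq_sum_range]
  refine Finset.sum_congr rfl fun t _ => ?_
  rw [vandermonde, Bmat, Matrix.of_apply, Matrix.of_apply, mul_comm]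

lemma vandermonde_mul_Bmat {l : Fin m → ℝ} (hl : Function.Injective l) :
    vandermonde l * Bmat l
      = Matrix.diagonal (fun j => ∏ k ∈ Finset.univ.erase j, (l j - l k)) := by
  have h := Nmat_eq l l
  rw [← h]
  ext i j
  rw [Nmat, Matrix.of_apply, Matrix.diagonal]
  rcases eq_or_ne i j with rfl | hij
  · simp
  · rw [Matrix.of_apply]
    rw [if_neg hij]
    exact Finset.prod_eq_zero (Finset.mem_erase.2 ⟨hij, Finset.mem_univ i⟩) (sub_self _)

lemma det_Nmat (v : Fin m → ℝ) {l : Fin m → ℝ} (hl : Function.Injective l) :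
    (Nmat v l).det * (vandermonde l).det
      = (vandermonde v).det * ∏ j, ∏ k ∈ Finset.univ.erase j, (l j - l k) := by
  rw [Nmat_eq, Matrix.det_mul, mul_assoc, mul_comm (Bmat l).det, ← Matrix.det_mul,
    vandermonde_mul_Bmat hl, Matrix.det_diagonal]

lemma Jmat_eq (a : Fin (m+1) → ℝ) (l : Fin m → ℝ) :
    Jmat a l = Matrix.of fun i j =>
      (-1 / dP a i.castSucc) * Nmat (fun i : Fin m => a i.castSucc) l i j := by
  ext i j
  rw [Jmat, Nmat]
  simp only [Matrix.of_apply]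
  ring

lemma det_Jmat (a : Fin (m+1) → ℝ) {l : Fin m → ℝ} (hl : Function.Injective l) :
    (Jmat a l).det * (vandermonde l).det
      = (∏ i : Fin m, (-1 / dP a i.castSucc))
        * ((vandermonde fun i : Fin m => a i.castSucc).det
          * ∏ j, ∏ k ∈ Finset.univ.erase j, (l j - l k)) := by
  rw [Jmat_eq, Matrix.det_mul_column, mul_assoc, det_Nmat _ hl]

end Stmt17Aux


namespace Stmt17Aux

lemma prod_swap_Iio {N : ℕ} (F : Fin N → Fin N → ℝ) :
    ∏ x, ∏ y ∈ Finset.Iio x, F x y = ∏ y, ∏ x ∈ Finset.Ioi y, F x y := by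
  refine Finset.prod_comm' fun x y => ?_
  simp only [Finset.mem_univ, Finset.mem_Iio, Finset.mem_Ioi, true_and, and_true]

lemma prod_erase_split {N : ℕ} (F : Fin N → Fin N → ℝ) :
    ∏ j, ∏ k ∈ Finset.univ.erase j, F j k
      = (∏ j, ∏ k ∈ Finset.Ioi j, F j k) * ∏ j, ∏ k ∈ Finset.Ioi j, F k j := by
  have hsplit : ∀ j : Fin N, Finset.univ.erase j = Finset.Iio j ∪ Finset.Ioi j := by
    intro j
    ext k
    simp only [Finset.mem_erase, Finset.mem_univ, and_true, Finset.mem_union, Finset.mem_Iio,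
      Finset.mem_Ioi]
    exact ne_iff_lt_or_gt
  have hdisj : ∀ j : Fin N, Disjoint (Finset.Iio j) (Finset.Ioi j) := fun j =>
    Finset.disjoint_left.2 fun k h1 h2 => absurd ((Finset.mem_Iio.1 h1).trans
      (Finset.mem_Ioi.1 h2)) (lt_irrefl _)
  calc ∏ j, ∏ k ∈ Finset.univ.erase j, F j k
      = ∏ j, ((∏ k ∈ Finset.Iio j, F j k) * ∏ k ∈ Finset.Ioi j, F j k) := by
        refine Finset.prod_congr rfl fun j _ => ?_
        rw [hsplit j, Finset.prod_union (hdisj j)]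
    _ = (∏ j, ∏ k ∈ Finset.Iio j, F j k) * ∏ j, ∏ k ∈ Finset.Ioi j, F j k :=
        Finset.prod_mul_distrib
    _ = (∏ j, ∏ k ∈ Finset.Ioi j, F j k) * ∏ j, ∏ k ∈ Finset.Ioi j, F k j := by
        rw [prod_swap_Iio F, mul_comm]

lemma prod_Iio_castSucc {M : ℕ} (G : Fin (M+1) → ℝ) (c : Fin (M+1)) :
    ∏ j ∈ Finset.Iio c, G j
      = ∏ j ∈ Finset.univ.filter (fun j : Fin M => j.castSucc < c), G j.castSucc := by
  refine (Finset.prod_bij (fun (j : Fin M) (_ : j ∈ Finset.univ.filter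
      (fun j : Fin M => j.castSucc < c)) => j.castSucc) ?_ ?_ ?_ ?_).symm
  · intro j hj
    exact Finset.mem_Iio.2 (Finset.mem_filter.1 hj).2
  · intro j _ k _ h
    exact Fin.castSucc_injective _ h
  · intro k hk
    have hklt : k < c := Finset.mem_Iio.1 hk
    have hkne : k ≠ Fin.last M := by
      intro h
      rw [h] at hklt
      exact absurd (lt_of_le_of_lt (Fin.le_last c) hklt) (lt_irrefl _)
    obtain ⟨j, hj⟩ := Fin.exists_castSucc_eq.2 hkne
    exact ⟨j, Finset.mem_filter.2 ⟨Finset.mem_univ _, hj ▸ hklt⟩, hj⟩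
  · intro j _; rfl

/-- split products over pairs in `Fin (m+1)` into `Fin m` pairs and the last column -/
lemma pair_split {M : ℕ} (F : Fin (M+1) → Fin (M+1) → ℝ) :
    ∏ j, ∏ k ∈ Finset.Ioi j, F j k
      = (∏ j : Fin M, ∏ k ∈ Finset.Ioi j, F j.castSucc k.castSucc)
        * ∏ j : Fin M, F j.castSucc (Fin.last M) := by
  have h1 : ∏ j, ∏ k ∈ Finset.Ioi j, F j k = ∏ k : Fin (M+1), ∏ j ∈ Finset.Iio k, F j k := by
    rw [prod_swap_Iio fun k j => F j k]
  rw [h1, Fin.prod_univ_castSucc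
    (f := fun k : Fin (M+1) => ∏ j ∈ Finset.Iio k, F j k)]
  congr 1
  · calc ∏ k : Fin M, ∏ j ∈ Finset.Iio (Fin.castSucc k), F j k.castSucc
        = ∏ k : Fin M, ∏ j ∈ Finset.Iio k, F j.castSucc k.castSucc := by
          refine Finset.prod_congr rfl fun k _ => ?_
          rw [prod_Iio_castSucc (fun j => F j k.castSucc) k.castSucc]
          congr 1
          ext j
          simp [Fin.castSucc_lt_castSucc_iff]
    _ = ∏ j : Fin M, ∏ k ∈ Finset.Ioi j, F j.castSucc k.castSucc :=
          prod_swap_Iio (fun x y => F y.castSucc x.castSucc)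
  · rw [prod_Iio_castSucc (fun j => F j (Fin.last M)) (Fin.last M)]
    have : Finset.univ.filter (fun j : Fin M => j.castSucc < Fin.last M) = Finset.univ := by
      ext j
      simp [Fin.castSucc_lt_last]
    rw [this]

end Stmt17Aux


namespace Stmt17Aux

open Matrix

section Algebra

variable {a : Fin (m+1) → ℝ} (ha : StrictAnti a) {l : Fin m → ℝ} (hl : l ∈ Vset a)
  (s : Fin (m+1) → ℕ) (hs : ∀ i, 1 ≤ s i)

include ha hl

lemma abs_det_vandermonde_l :
    |(vandermonde l).det| = ∏ j, ∏ k ∈ Finset.Ioi j, (l j - l k) := by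
  have hanti := V_strictAnti ha hl
  rw [det_vandermonde, Finset.abs_prod]
  refine Finset.prod_congr rfl fun i _ => ?_
  rw [Finset.abs_prod]
  refine Finset.prod_congr rfl fun j hj => ?_
  have : l j < l i := hanti (Finset.mem_Ioi.1 hj)
  rw [abs_of_neg (by linarith), neg_sub]

lemma Delta_l_pos : 0 < ∏ j, ∏ k ∈ Finset.Ioi j, (l j - l k) := by
  have hanti := V_strictAnti ha hl
  refine Finset.prod_pos fun i _ => Finset.prod_pos fun j hj => ?_
  have : l j < l i := hanti (Finset.mem_Ioi.1 hj)
  linarith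

omit hl

lemma abs_det_vandermonde_a :
    |(vandermonde fun i : Fin m => a i.castSucc).det|
      = ∏ j : Fin m, ∏ k ∈ Finset.Ioi j, (a j.castSucc - a k.castSucc) := by
  rw [det_vandermonde, Finset.abs_prod]
  refine Finset.prod_congr rfl fun i _ => ?_
  rw [Finset.abs_prod]
  refine Finset.prod_congr rfl fun j hj => ?_
  have : a j.castSucc < a i.castSucc := ha (Fin.castSucc_lt_castSucc_iff.2 (Finset.mem_Ioi.1 hj))
  rw [abs_of_neg (by linarith), neg_sub]

lemma Delta_a_pos : 0 < ∏ j : Fin m, ∏ k ∈ Finset.Ioi j, (a j.castSucc - a k.castSucc) :=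
  Finset.prod_pos fun i _ => Finset.prod_pos fun j hj =>
    sub_pos.2 (ha (Fin.castSucc_lt_castSucc_iff.2 (Finset.mem_Ioi.1 hj)))

lemma DD_pos (i : Fin (m+1)) : 0 < |dP a i| :=
  abs_pos.2 (dP_ne_zero ha.injective i)

include hl

lemma abs_prod_erase_l :
    |∏ j, ∏ k ∈ Finset.univ.erase j, (l j - l k)|
      = (∏ j, ∏ k ∈ Finset.Ioi j, (l j - l k)) ^ 2 := by
  have hanti := V_strictAnti ha hl
  rw [prod_erase_split (fun j k => (l j - l k)), abs_mul, sq]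
  congr 1
  · exact abs_of_pos (Delta_l_pos ha hl)
  · rw [Finset.abs_prod]
    refine Finset.prod_congr rfl fun i _ => ?_
    rw [Finset.abs_prod]
    refine Finset.prod_congr rfl fun j hj => ?_
    have : l j < l i := hanti (Finset.mem_Ioi.1 hj)
    rw [abs_of_neg (by linarith), neg_sub]

/-- absolute value of the Jacobian determinant -/
lemma abs_det_Jmat :
    |(Jmat a l).det|
      = (∏ j : Fin m, ∏ k ∈ Finset.Ioi j, (a j.castSucc - a k.castSucc))
        * (∏ j, ∏ k ∈ Finset.Ioi j, (l j - l k))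
        / ∏ i : Fin m, |dP a i.castSucc| := by
  have hanti := V_strictAnti ha hl
  have h := congrArg abs (det_Jmat a hanti.injective)
  rw [abs_mul, abs_mul, abs_mul, Finset.abs_prod, abs_det_vandermonde_l ha hl,
    abs_prod_erase_l ha hl, abs_det_vandermonde_a ha] at h
  have hΔ := Delta_l_pos ha hl
  have hD : ∀ i : Fin m, |(-1 : ℝ) / dP a i.castSucc| = 1 / |dP a i.castSucc| := by
    intro i; rw [abs_div, abs_neg, abs_one]
  simp only [hD] at h
  have hDD : (0:ℝ) < ∏ i : Fin m, |dP a i.castSucc| :=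
    Finset.prod_pos fun i _ => DD_pos ha i.castSucc
  rw [Finset.prod_div_distrib, Finset.prod_const_one] at h
  field_simp at h ⊢
  nlinarith [h, hΔ, hDD, abs_nonneg (Jmat a l).det]

end Algebra

end Stmt17Aux


namespace Stmt17Aux

open Matrix

section Algebra2

variable {a : Fin (m+1) → ℝ} (ha : StrictAnti a) {s : Fin (m+1) → ℕ} (hs : ∀ i, 1 ≤ s i)

include ha

/-- `∏_i |dP i|^{t i} = ∏_{j<k} (a j - a k)^{t j + t k}` -/
lemma prod_DD_pow (t : Fin (m+1) → ℕ) :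
    ∏ i, |dP a i| ^ t i = ∏ j, ∏ k ∈ Finset.Ioi j, (a j - a k) ^ (t j + t k) := by
  have h1 : ∀ i : Fin (m+1), |dP a i| ^ t i = ∏ k ∈ Finset.univ.erase i, |a i - a k| ^ t i := by
    intro i
    rw [dP, Finset.abs_prod, Finset.prod_pow]
  simp only [h1]
  rw [prod_erase_split (fun j k => |a j - a k| ^ t j)]
  have habs : ∀ j k : Fin (m+1), j < k → |a j - a k| = a j - a k := fun j k h =>
    abs_of_pos (sub_pos.2 (ha h))
  have habs' : ∀ j k : Fin (m+1), j < k → |a k - a j| = a j - a k := fun j k h => by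
    rw [abs_sub_comm]; exact habs j k h
  rw [← Finset.prod_mul_distrib]
  refine Finset.prod_congr rfl fun j _ => ?_
  rw [← Finset.prod_mul_distrib]
  refine Finset.prod_congr rfl fun k hk => ?_
  have hjk := Finset.mem_Ioi.1 hk
  rw [habs j k hjk, habs' j k hjk, pow_add]

/-- `Δa' * |dP last| = ∏_{j<k} (a j - a k)` -/
lemma Delta_mul_DD_last :
    (∏ j : Fin m, ∏ k ∈ Finset.Ioi j, (a j.castSucc - a k.castSucc)) * |dP a (Fin.last m)|
      = ∏ j, ∏ k ∈ Finset.Ioi j, (a j - a k) := by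
  rw [pair_split (fun j k => a j - a k)]
  congr 1
  rw [dP, prod_erase_succAbove (fun k => a (Fin.last m) - a k) (Fin.last m), Finset.abs_prod]
  refine Finset.prod_congr rfl fun j _ => ?_
  rw [Fin.succAbove_last_apply, abs_sub_comm,
    abs_of_pos (sub_pos.2 (ha (Fin.castSucc_lt_last j)))]

include hs

/-- the `a`-only constant identity -/
lemma const_identity :
    (∏ j : Fin m, ∏ k ∈ Finset.Ioi j, (a j.castSucc - a k.castSucc))
        * ∏ j, ∏ k ∈ Finset.Ioi j, (a j - a k) ^ (s j + s k - 1)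
      = (∏ i : Fin m, |dP a i.castSucc|) * ∏ i, |dP a i| ^ (s i - 1) := by
  have key : ∀ j k : Fin (m+1), j < k →
      (a j - a k) * (a j - a k) ^ (s j + s k - 1) = (a j - a k) ^ (s j + s k) := by
    intro j k _
    rw [← pow_succ']
    congr 1
    have := hs j
    omega
  have hT : (∏ j, ∏ k ∈ Finset.Ioi j, (a j - a k))
      * (∏ j, ∏ k ∈ Finset.Ioi j, (a j - a k) ^ (s j + s k - 1))
      = ∏ j, ∏ k ∈ Finset.Ioi j, (a j - a k) ^ (s j + s k) := by
    rw [← Finset.prod_mul_distrib]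
    refine Finset.prod_congr rfl fun j _ => ?_
    rw [← Finset.prod_mul_distrib]
    exact Finset.prod_congr rfl fun k hk => key j k (Finset.mem_Ioi.1 hk)
  have hDDs : ∏ i, |dP a i| ^ s i = ∏ j, ∏ k ∈ Finset.Ioi j, (a j - a k) ^ (s j + s k) :=
    prod_DD_pow ha s
  have hsplit : ∏ i, |dP a i| ^ s i = (∏ i, |dP a i| ^ (s i - 1)) * ∏ i, |dP a i| := by
    rw [← Finset.prod_mul_distrib]
    refine Finset.prod_congr rfl fun i _ => ?_
    rw [← pow_succ]
    congr 1
    have := hs i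
    omega
  have hlast : ∏ i, |dP a i| = (∏ i : Fin m, |dP a i.castSucc|) * |dP a (Fin.last m)| :=
    Fin.prod_univ_castSucc _
  have hDlast : (0:ℝ) < |dP a (Fin.last m)| := DD_pos ha _
  have h := Delta_mul_DD_last ha
  -- combine
  have := hT
  rw [← h] at this
  rw [hsplit, hlast] at hDDs
  nlinarith [this, hDDs, hDlast]

end Algebra2

end Stmt17Aux


namespace Stmt17Aux

section Density

variable {a : Fin (m+1) → ℝ} (ha : StrictAnti a) {s : Fin (m+1) → ℕ} (hs : ∀ i, 1 ≤ s i)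
  {l : Fin m → ℝ} (hl : l ∈ Vset a)

include ha hs hl

/-- the key pointwise density identity -/
lemma density_identity :
    |(Jmat a l).det| * ((∏ i : Fin m, Psi a l i ^ (s i.castSucc - 1))
        * (1 - ∑ i, Psi a l i) ^ (s (Fin.last m) - 1))
      = (∏ j : Fin m, ∏ k ∈ Finset.univ.filter (fun k => j < k), (l j - l k))
          / (∏ j : Fin (m+1), ∏ k ∈ Finset.univ.filter (fun k => j < k),
              (a j - a k) ^ (s j + s k - 1))
          * ∏ j : Fin m, ∏ i : Fin (m+1), |l j - a i| ^ (s i - 1) := by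
  have hfil1 : ∀ j : Fin m, Finset.univ.filter (fun k => j < k) = Finset.Ioi j := by
    intro j; ext k; simp
  have hfil2 : ∀ j : Fin (m+1), Finset.univ.filter (fun k => j < k) = Finset.Ioi j := by
    intro j; ext k; simp
  simp only [hfil1, hfil2]
  -- the q-power part
  have hlastQQ : 1 - ∑ i, Psi a l i = QQ a l (Fin.last m) := by
    have := congrFun (snoc_Psi ha.injective l) (Fin.last m)
    rwa [Fin.snoc_last] at this
  have hQQprod : (∏ i : Fin m, Psi a l i ^ (s i.castSucc - 1))
      * (1 - ∑ i, Psi a l i) ^ (s (Fin.last m) - 1)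
      = ∏ i : Fin (m+1), QQ a l i ^ (s i - 1) := by
    rw [Fin.prod_univ_castSucc (f := fun i => QQ a l i ^ (s i - 1)), hlastQQ]
    rfl
  have hQQpow : ∀ i : Fin (m+1), QQ a l i ^ (s i - 1)
      = (∏ j, |l j - a i| ^ (s i - 1)) / |dP a i| ^ (s i - 1) := by
    intro i
    have hpos := QQ_pos ha hl i
    have habs : QQ a l i = (∏ j, |l j - a i|) / |dP a i| := by
      rw [← abs_of_pos hpos, QQ, abs_div, Finset.abs_prod]
      congr 1
      exact Finset.prod_congr rfl fun j _ => (abs_sub_comm _ _)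
    rw [habs, div_pow, Finset.prod_pow]
  set Δ := ∏ j, ∏ k ∈ Finset.Ioi j, (l j - l k) with hΔdef
  set Δa : ℝ := ∏ j : Fin m, ∏ k ∈ Finset.Ioi j, (a j.castSucc - a k.castSucc) with hΔadef
  set D1 : ℝ := ∏ i : Fin m, |dP a i.castSucc| with hD1def
  set D2 : ℝ := ∏ i, |dP a i| ^ (s i - 1) with hD2def
  set Da : ℝ := ∏ j, ∏ k ∈ Finset.Ioi j, (a j - a k) ^ (s j + s k - 1) with hDadef
  have hdet := abs_det_Jmat ha hl
  rw [hQQprod, hdet]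
  have hpows : ∏ i : Fin (m+1), QQ a l i ^ (s i - 1)
      = (∏ i : Fin (m+1), ∏ j, |l j - a i| ^ (s i - 1)) / D2 := by
    rw [hD2def, ← Finset.prod_div_distrib]
    exact Finset.prod_congr rfl fun i _ => hQQpow i
  rw [hpows]
  have hswap : ∏ j : Fin m, ∏ i : Fin (m+1), |l j - a i| ^ (s i - 1)
      = ∏ i : Fin (m+1), ∏ j, |l j - a i| ^ (s i - 1) := Finset.prod_comm
  rw [hswap]
  set P : ℝ := ∏ i : Fin (m+1), ∏ j, |l j - a i| ^ (s i - 1) with hPdef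
  have hconst : Δa * Da = D1 * D2 := const_identity ha hs
  have hD1pos : 0 < D1 := Finset.prod_pos fun i _ => DD_pos ha i.castSucc
  have hD2pos : 0 < D2 := Finset.prod_pos fun i _ =>
    pow_pos (DD_pos ha i) _
  have hDapos : 0 < Da := Finset.prod_pos fun j _ => Finset.prod_pos fun k hk =>
    pow_pos (sub_pos.2 (ha (Finset.mem_Ioi.1 hk))) _
  rw [← hD1def, ← hΔadef, ← hΔdef]
  field_simp
  linear_combination (Δ * P) * hconst

end Density

end Stmt17Aux


namespace Stmt17Aux

lemma measurableSet_U : MeasurableSet (Uset m) := by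
  have : Uset m = (⋂ i, {p : Fin m → ℝ | 0 < p i}) ∩ {p : Fin m → ℝ | ∑ i, p i < 1} := by
    ext p; simp [Uset, Set.mem_iInter]
  rw [this]
  exact MeasurableSet.inter
    (MeasurableSet.iInter fun i => measurableSet_lt measurable_const (measurable_pi_apply i))
    (measurableSet_lt (Finset.measurable_sum _ fun i _ => measurable_pi_apply i)
      measurable_const)

lemma measurableSet_V (a : Fin (m+1) → ℝ) : MeasurableSet (Vset a) := by
  have : Vset a = ⋂ j : Fin m,
      ({l : Fin m → ℝ | a j.succ < l j} ∩ {l : Fin m → ℝ | l j < a j.castSucc}) := by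
    ext l; simp [Vset, Set.mem_iInter, forall_and]
  rw [this]
  exact MeasurableSet.iInter fun j => MeasurableSet.inter
    (measurableSet_lt measurable_const (measurable_pi_apply j))
    (measurableSet_lt (measurable_pi_apply j) measurable_const)

section Main

variable {a : Fin (m+1) → ℝ} {Λ : (Fin m → ℝ) → (Fin m → ℝ)}
variable (hΛ : ∀ p : Fin m → ℝ, ((∀ i, 0 < p i) ∧ ∑ i, p i < 1) →
      StrictAnti (Λ p) ∧ (∀ j i, Λ p j ≠ a i) ∧
        (∀ j : Fin m,
          ∑ i : Fin (m + 1),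
            (Fin.snoc (α := fun _ => ℝ) p (1 - ∑ i, p i) i) / (Λ p j - a i) = 0))

include hΛ

lemma image_inter (ha : StrictAnti a) (E : Set (Fin m → ℝ)) :
    Psi a '' (E ∩ Vset a) = (Λ ⁻¹' E) ∩ Uset m := by
  ext p
  constructor
  · rintro ⟨l, ⟨hlE, hlV⟩, rfl⟩
    refine ⟨?_, Psi_mem_U ha hlV⟩
    rw [Set.mem_preimage, lambda_Psi hΛ ha hlV]
    exact hlE
  · rintro ⟨hpE, hpU⟩
    exact ⟨Λ p, ⟨hpE, lambda_mem_V hΛ ha hpU⟩, Psi_lambda hΛ ha hpU⟩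

lemma Psi_injOn (ha : StrictAnti a) : Set.InjOn (Psi a) (Vset a) := fun x hx y hy h => by
  rw [← lambda_Psi hΛ ha hx, h, lambda_Psi hΛ ha hy]

end Main

end Stmt17Aux


open Stmt17Aux

/-- Zeros of the random rational function `Σ_i q_i/(x - a_i)` with Dirichlet distributed
`(q_1,…,q_{m+1}) ~ D[s_1,…,s_{m+1}]`: the `m` zeros `λ_1 > … > λ_m` interlace with the
`a_i`, and their joint density on the interlacing region is
`Γ(Σs)/(∏Γ(s_i)) ∏_{j<k}(λ_j-λ_k) / ∏_{j<k}(a_j-a_k)^{s_j+s_k-1} ∏_{j,p}|λ_j-a_p|^{s_p-1}`.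
The Dirichlet distribution is realized by its density in the first `m` coordinates
`p = (q_1,…,q_m)`, with `q_{m+1} = 1 - Σ p`, and `Λ p` denotes the ordered zeros. -/
theorem stmt17 (m : ℕ) (hm : 1 ≤ m) (a : Fin (m + 1) → ℝ) (ha : StrictAnti a)
    (s : Fin (m + 1) → ℕ) (hs : ∀ i, 1 ≤ s i)
    (Λ : (Fin m → ℝ) → (Fin m → ℝ)) (hmeas : Measurable Λ)
    (hΛ : ∀ p : Fin m → ℝ, ((∀ i, 0 < p i) ∧ ∑ i, p i < 1) →
      StrictAnti (Λ p) ∧ (∀ j i, Λ p j ≠ a i) ∧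
        (∀ j : Fin m,
          ∑ i : Fin (m + 1), (Fin.snoc (α := fun _ => ℝ) p (1 - ∑ i, p i) i) / (Λ p j - a i) = 0)) :
    (∀ p : Fin m → ℝ, ((∀ i, 0 < p i) ∧ ∑ i, p i < 1) →
      ∀ j : Fin m, a j.succ < Λ p j ∧ Λ p j < a j.castSucc) ∧
    Measure.map Λ
      (volume.withDensity (fun p : Fin m → ℝ => ENNReal.ofReal (
        if (∀ i, 0 < p i) ∧ ∑ i, p i < 1 then
          (Real.Gamma (∑ i, (s i : ℝ)) / ∏ i, Real.Gamma (s i : ℝ)) *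
            ((∏ i : Fin m, p i ^ (s i.castSucc - 1)) *
              (1 - ∑ i, p i) ^ (s (Fin.last m) - 1))
        else 0))) =
    volume.withDensity (fun lam : Fin m → ℝ => ENNReal.ofReal (
      if ∀ j : Fin m, a j.succ < lam j ∧ lam j < a j.castSucc then
        (Real.Gamma (∑ i, (s i : ℝ)) / ∏ i, Real.Gamma (s i : ℝ)) *
          (∏ j : Fin m, ∏ k ∈ Finset.univ.filter (fun k => j < k), (lam j - lam k)) /
          (∏ j : Fin (m + 1), ∏ k ∈ Finset.univ.filter (fun k => j < k),
            (a j - a k) ^ (s j + s k - 1)) *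
          ∏ j : Fin m, ∏ i : Fin (m + 1), |lam j - a i| ^ (s i - 1)
      else 0)) := by
  classical
  constructor
  · intro p hp
    exact lambda_mem_V hΛ ha hp
  set C : ℝ := Real.Gamma (∑ i, (s i : ℝ)) / ∏ i, Real.Gamma (s i : ℝ) with hC
  set fdens : (Fin m → ℝ) → ENNReal := fun p => ENNReal.ofReal (
        if (∀ i, 0 < p i) ∧ ∑ i, p i < 1 then
          C * ((∏ i : Fin m, p i ^ (s i.castSucc - 1)) *
              (1 - ∑ i, p i) ^ (s (Fin.last m) - 1))
        else 0) with hfdens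
  set gdens : (Fin m → ℝ) → ENNReal := fun lam => ENNReal.ofReal (
      if ∀ j : Fin m, a j.succ < lam j ∧ lam j < a j.castSucc then
        C * (∏ j : Fin m, ∏ k ∈ Finset.univ.filter (fun k => j < k), (lam j - lam k)) /
          (∏ j : Fin (m + 1), ∏ k ∈ Finset.univ.filter (fun k => j < k),
            (a j - a k) ^ (s j + s k - 1)) *
          ∏ j : Fin m, ∏ i : Fin (m + 1), |lam j - a i| ^ (s i - 1)
      else 0) with hgdens
  have hfU : ∀ p, p ∉ Uset m → fdens p = 0 := by
    intro p hp
    have hp' : ¬((∀ i, 0 < p i) ∧ ∑ i, p i < 1) := hp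
    rw [hfdens]
    simp only
    rw [if_neg hp', ENNReal.ofReal_zero]
  have hgV : ∀ l, l ∉ Vset a → gdens l = 0 := by
    intro l hlv
    have hlv' : ¬(∀ j : Fin m, a j.succ < l j ∧ l j < a j.castSucc) := hlv
    rw [hgdens]
    simp only
    rw [if_neg hlv', ENNReal.ofReal_zero]
  refine Measure.ext fun E hE => ?_
  rw [Measure.map_apply hmeas hE, withDensity_apply _ (hmeas hE), withDensity_apply _ hE]
  have hEV : MeasurableSet (E ∩ Vset a) := hE.inter (measurableSet_V a)
  -- restrict both sides to the good regions
  have hleft : ∫⁻ p in Λ ⁻¹' E, fdens p = ∫⁻ p in (Λ ⁻¹' E) ∩ Uset m, fdens p := by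
    rw [← lintegral_indicator (hmeas hE) fdens, ← lintegral_indicator ((hmeas hE).inter
      measurableSet_U) fdens]
    congr 1
    funext p
    by_cases hpU : p ∈ Uset m
    · by_cases hpE : p ∈ Λ ⁻¹' E
      · rw [Set.indicator_of_mem hpE, Set.indicator_of_mem (Set.mem_inter hpE hpU)]
      · rw [Set.indicator_of_notMem hpE, Set.indicator_of_notMem (fun h => hpE h.1)]
    · rw [Set.indicator_apply, Set.indicator_apply]
      by_cases hpE : p ∈ Λ ⁻¹' E <;> simp [hpE, hpU, hfU p hpU]
  have hright : ∫⁻ l in E, gdens l = ∫⁻ l in E ∩ Vset a, gdens l := by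
    rw [← lintegral_indicator hE gdens, ← lintegral_indicator hEV gdens]
    congr 1
    funext l
    by_cases hlV : l ∈ Vset a
    · by_cases hlE : l ∈ E
      · rw [Set.indicator_of_mem hlE, Set.indicator_of_mem (Set.mem_inter hlE hlV)]
      · rw [Set.indicator_of_notMem hlE, Set.indicator_of_notMem (fun h => hlE h.1)]
    · rw [Set.indicator_apply, Set.indicator_apply]
      by_cases hlE : l ∈ E <;> simp [hlE, hlV, hgV l hlV]
  rw [hleft, hright, ← image_inter hΛ ha E]
  rw [MeasureTheory.lintegral_image_eq_lintegral_abs_det_fderiv_mul volume hEV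
    (fun x _ => (hasFDerivAt_Psi a x).hasFDerivWithinAt)
    ((Psi_injOn hΛ ha).mono (Set.inter_subset_right)) fdens]
  refine setLIntegral_congr_fun hEV (fun l hl => ?_)
  obtain ⟨hlE, hlV⟩ := hl
  have hPsiU : Psi a l ∈ Uset m := Psi_mem_U ha hlV
  have hPsiU' : (∀ i, 0 < Psi a l i) ∧ ∑ i, Psi a l i < 1 := hPsiU
  have hlV' : ∀ j : Fin m, a j.succ < l j ∧ l j < a j.castSucc := hlV
  rw [hfdens, hgdens]
  simp only
  rw [if_pos hPsiU', if_pos hlV', JCLM_det, ← ENNReal.ofReal_mul (abs_nonneg _)]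
  congr 1
  have hkey := density_identity ha hs hlV
  calc |(Jmat a l).det| * (C * ((∏ i : Fin m, Psi a l i ^ (s i.castSucc - 1)) *
          (1 - ∑ i, Psi a l i) ^ (s (Fin.last m) - 1)))
      = C * (|(Jmat a l).det| * ((∏ i : Fin m, Psi a l i ^ (s i.castSucc - 1)) *
          (1 - ∑ i, Psi a l i) ^ (s (Fin.last m) - 1))) := by ring
    _ = C * ((∏ j : Fin m, ∏ k ∈ Finset.univ.filter (fun k => j < k), (l j - l k))
          / (∏ j : Fin (m + 1), ∏ k ∈ Finset.univ.filter (fun k => j < k),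
              (a j - a k) ^ (s j + s k - 1))
          * ∏ j : Fin m, ∏ i : Fin (m + 1), |l j - a i| ^ (s i - 1)) := by rw [hkey]
    _ = C * (∏ j : Fin m, ∏ k ∈ Finset.univ.filter (fun k => j < k), (l j - l k))
          / (∏ j : Fin (m + 1), ∏ k ∈ Finset.univ.filter (fun k => j < k),
              (a j - a k) ^ (s j + s k - 1))
          * ∏ j : Fin m, ∏ i : Fin (m + 1), |l j - a i| ^ (s i - 1) := by ring
end
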